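/- arXiv:0705.0340 — 5 statements merged into one kernel-verified Lean document; each statement's English description precedes it below -/
import Mathlib

section
/- Let 1≤p<∞ and let φ:[0,∞)→[0,∞) be a continuous strictly increasing Orlicz function whose inverse satisfies φ^{-1}(u) = u^{1/p} ρ(u^{-1/p}) for all u>0, where ρ is a concave quasi-concave function with ρ_*(t):=tρ(1/t) mapping (0,∞) onto (0,∞). Then the function ψ(u) := φ(u^{1/p}) is convex on [0,∞). -/
open Set

/-- `ρ : [0,∞) → [0,∞)` is quasi-concave: continuous and positive on `(0,∞)`,
nonnegative, and `ρ(s) ≤ max(1, s/t) ρ(t)` for all `s, t > 0`. -/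
def QuasiConcave (ρ : ℝ → ℝ) : Prop :=
  ContinuousOn ρ (Set.Ioi 0) ∧ (∀ t : ℝ, 0 < t → 0 < ρ t) ∧ 0 ≤ ρ 0 ∧
    ∀ s t : ℝ, 0 < s → 0 < t → ρ s ≤ max 1 (s / t) * ρ t

/-- Two-point weighted Minkowski inequality. -/
lemma mink_aux {p a c₁ c₂ l m : ℝ} (hp : 1 ≤ p) (ha : 0 ≤ a) (h1 : 0 ≤ c₁) (h2 : 0 ≤ c₂)
    (hl : 0 ≤ l) (hm : 0 ≤ m) (hlm : l + m = 1) :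
    l * (a + c₁) ^ p + m * (a + c₂) ^ p
      ≤ (a + (l * c₁ ^ p + m * c₂ ^ p) ^ (1/p)) ^ p := by
  have hp0 : 0 < p := lt_of_lt_of_le one_pos hp
  have hip : (1/p) * p = 1 := by field_simp
  have hpi : p * (1/p) = 1 := by field_simp
  have hrw : ∀ x : ℝ, 0 ≤ x → (x ^ (1/p)) ^ p = x := by
    intro x hx
    rw [← Real.rpow_mul hx, hip, Real.rpow_one]
  have hrw2 : ∀ x : ℝ, 0 ≤ x → (x ^ p) ^ (1/p) = x := by
    intro x hx
    rw [← Real.rpow_mul hx, hpi, Real.rpow_one]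
  set f : Fin 2 → ℝ := ![l ^ (1/p) * a, m ^ (1/p) * a] with hf
  set g : Fin 2 → ℝ := ![l ^ (1/p) * c₁, m ^ (1/p) * c₂] with hg
  have key := Real.Lp_add_le Finset.univ f g hp
  have hl1 : ((l ^ (1/p)) : ℝ) ^ p = l := by
    rw [← Real.rpow_mul hl, hip, Real.rpow_one]
  have hm1 : ((m ^ (1/p)) : ℝ) ^ p = m := by
    rw [← Real.rpow_mul hm, hip, Real.rpow_one]
  have hlp : 0 ≤ l ^ (1/p) := Real.rpow_nonneg hl _
  have hmp : 0 ≤ m ^ (1/p) := Real.rpow_nonneg hm _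
  simp only [hf, hg, Fin.sum_univ_two, Matrix.cons_val_zero, Matrix.cons_val_one,
    Matrix.head_cons] at key
  rw [← mul_add, ← mul_add,
    abs_of_nonneg (by positivity), abs_of_nonneg (by positivity),
    abs_of_nonneg (by positivity), abs_of_nonneg (by positivity),
    abs_of_nonneg (by positivity), abs_of_nonneg (by positivity),
    Real.mul_rpow hlp (by positivity), Real.mul_rpow hmp (by positivity),
    Real.mul_rpow hlp ha, Real.mul_rpow hmp ha,
    Real.mul_rpow hlp h1, Real.mul_rpow hmp h2,
    hl1, hm1, ← add_mul, hlm, one_mul, hrw2 _ ha] at key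
  have := Real.rpow_le_rpow (Real.rpow_nonneg (by positivity) _) key hp0.le
  rwa [hrw _ (by positivity)] at this

set_option maxHeartbeats 1000000 in
theorem stmt4 (p : ℝ) (hp : 1 ≤ p)
    -- `φ` is a continuous strictly increasing Orlicz function
    (φ : ℝ → ℝ)
    (hφ0 : φ 0 = 0)
    (hφnonneg : ∀ u : ℝ, 0 ≤ u → 0 ≤ φ u)
    (hφcont : ContinuousOn φ (Set.Ici 0))
    (hφsm : StrictMonoOn φ (Set.Ici 0))
    (hφconv : ConvexOn ℝ (Set.Ici 0) φ)
    -- `φ⁻¹(u) = u^{1/p} ρ(u^{-1/p})` for `u > 0`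
    (ρ : ℝ → ℝ) (hρ : QuasiConcave ρ) (hρconc : ConcaveOn ℝ (Set.Ici 0) ρ)
    (hρstar : Set.SurjOn (fun t : ℝ => t * ρ (1 / t)) (Set.Ioi 0) (Set.Ioi 0))
    (hinv : ∀ u : ℝ, 0 < u → φ (u ^ (1/p) * ρ (u ^ (-(1/p)))) = u) :
    ConvexOn ℝ (Set.Ici 0) (fun u : ℝ => φ (u ^ (1/p))) := by
  obtain ⟨hρcont, hρpos, hρ0, hρq⟩ := hρ
  have hp0 : 0 < p := lt_of_lt_of_le one_pos hp
  have hq0 : (0:ℝ) < 1/p := by positivity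
  have hip : (1/p) * p = 1 := by field_simp
  have hpi : p * (1/p) = 1 := by field_simp
  have hrw : ∀ x : ℝ, 0 ≤ x → (x ^ (1/p)) ^ p = x := by
    intro x hx; rw [← Real.rpow_mul hx, hip, Real.rpow_one]
  have hrw2 : ∀ x : ℝ, 0 ≤ x → (x ^ p) ^ (1/p) = x := by
    intro x hx; rw [← Real.rpow_mul hx, hpi, Real.rpow_one]
  -- ρ is nondecreasing on (0,∞)
  have hρmono : ∀ s t : ℝ, 0 < s → s ≤ t → ρ s ≤ ρ t := by
    intro s t hs hst
    have ht : 0 < t := lt_of_lt_of_le hs hst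
    have h1 := hρq s t hs ht
    rwa [max_eq_left (by rw [div_le_one ht]; exact hst), one_mul] at h1
  set R : ℝ → ℝ := fun t => t * ρ (1/t) with hR
  have hRpos : ∀ t : ℝ, 0 < t → 0 < R t := fun t ht => mul_pos ht (hρpos _ (by positivity))
  -- ρ* is nondecreasing on (0,∞)
  have hRmono : ∀ s t : ℝ, 0 < s → s ≤ t → R s ≤ R t := by
    intro s t hs hst
    have ht : 0 < t := lt_of_lt_of_le hs hst
    have h1 := hρq (1/s) (1/t) (by positivity) (by positivity)
    have hd : (1/s)/(1/t) = t/s := by field_simp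
    rw [hd, max_eq_right (by rw [le_div_iff₀ hs]; simpa using hst)] at h1
    have h2 := mul_le_mul_of_nonneg_left h1 hs.le
    calc R s = s * ρ (1/s) := rfl
      _ ≤ s * (t/s * ρ (1/t)) := h2
      _ = t * ρ (1/t) := by field_simp
      _ = R t := rfl
  -- ρ* is concave on (0,∞)  (three-point version)
  have hRconc : ∀ u w θ : ℝ, 0 < u → 0 < w → 0 ≤ θ → θ ≤ 1 →
      θ * R u + (1-θ) * R w ≤ R (θ*u + (1-θ)*w) := by
    intro u w θ hu hw hθ0 hθ1
    rcases eq_or_lt_of_le hθ0 with h|hθp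
    · simp [← h]
    rcases eq_or_lt_of_le hθ1 with h|hθq
    · simp [h]
    have hθq' : 0 < 1 - θ := by linarith
    set z := θ*u + (1-θ)*w with hz
    have hzpos : 0 < z := by positivity
    have hsum : θ*u/z + (1-θ)*w/z = 1 := by field_simp; exact hz.symm
    have harg : (θ*u/z) • (1/u) + ((1-θ)*w/z) • (1/w) = 1/z := by
      simp only [smul_eq_mul]
      rw [div_mul_div_comm, div_mul_div_comm, mul_one, mul_one, mul_div_mul_right _ _ hu.ne',
        mul_div_mul_right _ _ hw.ne', ← add_div]
      ring
    have key := hρconc.2 (mem_Ici.2 (by positivity : (0:ℝ) ≤ 1/u))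
      (mem_Ici.2 (by positivity : (0:ℝ) ≤ 1/w))
      (by positivity : (0:ℝ) ≤ θ*u/z) (by positivity : (0:ℝ) ≤ (1-θ)*w/z) hsum
    rw [harg] at key
    simp only [smul_eq_mul] at key
    have h2 := mul_le_mul_of_nonneg_left key hzpos.le
    have e1 : z * (θ*u/z * ρ (1/u) + (1-θ)*w/z * ρ (1/w))
        = θ*(u*ρ (1/u)) + (1-θ)*(w*ρ (1/w)) := by field_simp
    rw [e1] at h2
    calc θ * R u + (1-θ) * R w = θ*(u*ρ (1/u)) + (1-θ)*(w*ρ (1/w)) := rfl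
      _ ≤ z * ρ (1/z) := h2
      _ = R z := rfl
  -- main concavity of H v = (R (v^{1/p}))^p, assuming B ≤ A
  have main : ∀ A B l m : ℝ, 0 < A → 0 < B → 0 ≤ l → 0 ≤ m → l + m = 1 → B ≤ A →
      l * (R (A^(1/p)))^p + m * (R (B^(1/p)))^p ≤ (R ((l*A + m*B)^(1/p)))^p := by
    intro A B l m hA hB hl hm hlm hBA
    set x := A^(1/p) with hxd
    set y := B^(1/p) with hyd
    have hx : 0 < x := Real.rpow_pos_of_pos hA _
    have hy : 0 < y := Real.rpow_pos_of_pos hB _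
    have hyx : y ≤ x := Real.rpow_le_rpow hB.le hBA hq0.le
    have hxA : x ^ p = A := hrw A hA.le
    have hyB : y ^ p = B := hrw B hB.le
    set S := l*A + m*B with hSd
    have hBS : B ≤ S := by nlinarith [mul_nonneg hl (sub_nonneg.2 hBA)]
    have hSA : S ≤ A := by nlinarith [mul_nonneg hm (sub_nonneg.2 hBA)]
    have hS : 0 < S := lt_of_lt_of_le hB hBS
    set s := S^(1/p) with hsd
    have hs : 0 < s := Real.rpow_pos_of_pos hS _
    have hys : y ≤ s := Real.rpow_le_rpow hB.le hBS hq0.le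
    have hsx : s ≤ x := Real.rpow_le_rpow hS.le hSA hq0.le
    rcases eq_or_lt_of_le hyx with heq|hlt
    · -- x = y : A = B, trivial
      have hAB : A = B := by rw [← hxA, ← hyB, heq]
      have hSS : S = A := by rw [hSd, hAB]; ring_nf; nlinarith
      have hsx2 : s = x := by rw [hsd, hSS, ← hxd]
      rw [heq, hsx2]
      nlinarith [Real.rpow_nonneg (hRpos x hx).le p]
    · -- y < x
      set b := (R x - R y)/(x - y) with hbd
      have hxy : 0 < x - y := sub_pos.2 hlt
      have hb : 0 ≤ b := div_nonneg (sub_nonneg.2 (hRmono y x hy hyx)) hxy.le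
      set a := R y - b * y with had
      have hay : a + b * y = R y := by ring
      have hax : a + b * x = R x := by
        rw [had, hbd]; field_simp; ring
      have hρxy : ρ (1/x) ≤ ρ (1/y) :=
        hρmono _ _ (by positivity) (one_div_le_one_div_of_le hy hyx)
      have hby : b * y ≤ R y := by
        rw [hbd, div_mul_eq_mul_div, div_le_iff₀ hxy]
        have hRx : R x = x * ρ (1/x) := rfl
        have hRy : R y = y * ρ (1/y) := rfl
        nlinarith [mul_le_mul_of_nonneg_left hρxy (mul_pos hx hy).le]
      have ha : 0 ≤ a := by rw [had]; linarith
      -- chord lies below R on [y, x]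
      set θ := (x - s)/(x - y) with hθd
      have hθ0 : 0 ≤ θ := div_nonneg (by linarith) hxy.le
      have hθ1 : θ ≤ 1 := by rw [hθd, div_le_one hxy]; linarith
      have hseq : θ*y + (1-θ)*x = s := by rw [hθd]; field_simp; ring
      have hchord : a + b * s ≤ R s := by
        have h1 := hRconc y x θ hy hx hθ0 hθ1
        rw [hseq] at h1
        have h2 : a + b * s = θ * (a + b*y) + (1-θ) * (a + b*x) := by
          rw [← hseq]; ring
        rw [h2, hay, hax]
        exact h1
      have habs : 0 ≤ a + b * s := by positivity
      have hpow : (a + b * s)^p ≤ (R s)^p :=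
        Real.rpow_le_rpow habs hchord hp0.le
      have hmink := mink_aux (a := a) (c₁ := b*x) (c₂ := b*y) hp ha
        (by positivity) (by positivity) hl hm hlm
      have hceq : (l*(b*x)^p + m*(b*y)^p)^(1/p) = b * s := by
        rw [Real.mul_rpow hb hx.le, Real.mul_rpow hb hy.le, hxA, hyB]
        have e : l*(b^p*A) + m*(b^p*B) = b^p * S := by rw [hSd]; ring
        rw [e, Real.mul_rpow (Real.rpow_nonneg hb p) hS.le, hrw2 b hb, ← hsd]
      rw [hceq] at hmink
      calc l * (R x)^p + m * (R y)^p = l * (a+b*x)^p + m * (a+b*y)^p := by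
            rw [hax, hay]
        _ ≤ (a + b*s)^p := hmink
        _ ≤ (R s)^p := hpow
  have hkey : ∀ A B l m : ℝ, 0 < A → 0 < B → 0 ≤ l → 0 ≤ m → l + m = 1 →
      l * (R (A^(1/p)))^p + m * (R (B^(1/p)))^p ≤ (R ((l*A + m*B)^(1/p)))^p := by
    intro A B l m hA hB hl hm hlm
    rcases le_total B A with h|h
    · exact main A B l m hA hB hl hm hlm h
    · have := main B A m l hB hA hm hl (by linarith) h
      calc l * (R (A^(1/p)))^p + m * (R (B^(1/p)))^p
          = m * (R (B^(1/p)))^p + l * (R (A^(1/p)))^p := by ring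
        _ ≤ (R ((m*B + l*A)^(1/p)))^p := this
        _ = (R ((l*A + m*B)^(1/p)))^p := by rw [add_comm (m*B)]
  -- ψ (H v) = v
  have hHinv : ∀ v : ℝ, 0 < v → φ (((R (v^(1/p)))^p) ^ (1/p)) = v := by
    intro v hv
    rw [hrw2 _ (hRpos _ (Real.rpow_pos_of_pos hv _)).le]
    have : R (v^(1/p)) = v ^ (1/p) * ρ (v ^ (-(1/p))) := by
      rw [hR]
      simp only
      rw [Real.rpow_neg hv.le]
      simp [one_div]
    rw [this]
    exact hinv v hv
  -- surjectivity of H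
  have hsurj : ∀ c : ℝ, 0 < c → ∃ v : ℝ, 0 < v ∧ (R (v^(1/p)))^p = c := by
    intro c hc
    obtain ⟨t, ht, hta⟩ := hρstar (mem_Ioi.2 (Real.rpow_pos_of_pos hc (1/p)))
    have ht' : 0 < t := mem_Ioi.1 ht
    refine ⟨t ^ p, Real.rpow_pos_of_pos ht' _, ?_⟩
    rw [hrw2 t ht'.le]
    have : R t = c ^ (1/p) := hta
    rw [this, hrw c hc.le]
  -- monotonicity of ψ
  have hψmono : ∀ u v : ℝ, 0 ≤ u → u ≤ v → φ (u^(1/p)) ≤ φ (v^(1/p)) := by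
    intro u v hu huv
    exact hφsm.monotoneOn (mem_Ici.2 (Real.rpow_nonneg hu _))
      (mem_Ici.2 (Real.rpow_nonneg (le_trans hu huv) _))
      (Real.rpow_le_rpow hu huv hq0.le)
  have hψ0 : φ ((0:ℝ)^(1/p)) = 0 := by
    rw [Real.zero_rpow (ne_of_gt hq0), hφ0]
  -- the scaling inequality : m ≤ 1 ⇒ m * H v ≤ H (m v)
  have hscale : ∀ v m : ℝ, 0 < v → 0 < m → m ≤ 1 →
      m * (R (v^(1/p)))^p ≤ (R ((m*v)^(1/p)))^p := by
    intro v m hv hm hm1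
    have hv' : 0 < v^(1/p) := Real.rpow_pos_of_pos hv _
    have hm' : 0 < m^(1/p) := Real.rpow_pos_of_pos hm _
    have hmle : m^(1/p) ≤ 1 := by
      calc m^(1/p) ≤ 1^(1/p) := Real.rpow_le_rpow hm.le hm1 hq0.le
        _ = 1 := Real.one_rpow _
    have hmul : (m*v)^(1/p) = m^(1/p) * v^(1/p) := Real.mul_rpow hm.le hv.le
    have hρle : ρ (1/(v^(1/p))) ≤ ρ (1/((m*v)^(1/p))) := by
      apply hρmono _ _ (one_div_pos.2 hv')
      rw [hmul, div_le_div_iff₀ hv' (mul_pos hm' hv')]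
      nlinarith [mul_le_mul_of_nonneg_right hmle hv'.le]
    have hRle : m^(1/p) * R (v^(1/p)) ≤ R ((m*v)^(1/p)) := by
      rw [hR]
      simp only
      rw [hmul] at hρle ⊢
      calc m ^ (1/p) * (v ^ (1/p) * ρ (1/v^(1/p)))
          = (m^(1/p) * v^(1/p)) * ρ (1/v^(1/p)) := by ring
        _ ≤ (m^(1/p) * v^(1/p)) * ρ (1/(m^(1/p) * v^(1/p))) :=
            mul_le_mul_of_nonneg_left hρle (le_of_lt (mul_pos hm' hv'))
    have h1 : (m^(1/p) * R (v^(1/p)))^p ≤ (R ((m*v)^(1/p)))^p :=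
      Real.rpow_le_rpow (mul_nonneg hm'.le (hRpos _ hv').le) hRle hp0.le
    rwa [Real.mul_rpow hm'.le (hRpos _ hv').le, hrw m hm.le] at h1
  -- assemble
  constructor
  · exact convex_Ici 0
  intro c hc d hd l m hl hm hlm
  simp only [smul_eq_mul]
  rcases eq_or_lt_of_le (mem_Ici.1 hc) with hcz|hcz
  · rcases eq_or_lt_of_le (mem_Ici.1 hd) with hdz|hdz
    · -- c = 0, d = 0
      rw [← hcz, ← hdz]
      have e : l*(0:ℝ) + m*0 = 0 := by ring
      rw [e, hψ0]
      simp
    · -- c = 0, d > 0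
      rw [← hcz, hψ0, mul_zero, zero_add, zero_add]
      rcases eq_or_lt_of_le hm with hmz|hmz
      · rw [← hmz, zero_mul, zero_mul, Real.zero_rpow (ne_of_gt hq0), hφ0]
      obtain ⟨v, hv, hvd⟩ := hsurj d hdz
      have h1 : m * d ≤ (R ((m*v)^(1/p)))^p := by
        rw [← hvd]
        exact hscale v m hv hmz (by linarith)
      have h2 := hψmono (m*d) _ (by positivity) h1
      rw [hHinv (m*v) (by positivity)] at h2
      have h3 : φ (d^(1/p)) = v := by rw [← hvd]; exact hHinv v hv
      rw [h3]
      exact h2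
  · rcases eq_or_lt_of_le (mem_Ici.1 hd) with hdz|hdz
    · -- d = 0, c > 0
      rw [← hdz, hψ0, mul_zero, add_zero, add_zero]
      rcases eq_or_lt_of_le hl with hlz|hlz
      · rw [← hlz, zero_mul, zero_mul, Real.zero_rpow (ne_of_gt hq0), hφ0]
      obtain ⟨v, hv, hvc⟩ := hsurj c hcz
      have h1 : l * c ≤ (R ((l*v)^(1/p)))^p := by
        rw [← hvc]
        exact hscale v l hv hlz (by linarith)
      have h2 := hψmono (l*c) _ (by positivity) h1
      rw [hHinv (l*v) (by positivity)] at h2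
      have h3 : φ (c^(1/p)) = v := by rw [← hvc]; exact hHinv v hv
      rw [h3]
      exact h2
    · -- c, d > 0
      obtain ⟨va, hva, hvac⟩ := hsurj c hcz
      obtain ⟨vb, hvb, hvbd⟩ := hsurj d hdz
      have hpos : 0 < l*va + m*vb := by
        rcases eq_or_lt_of_le hl with h|h
        · have hm1 : m = 1 := by linarith
          rw [← h, hm1]; simpa using hvb
        · have := mul_nonneg hm hvb.le
          nlinarith
      have h1 : l*c + m*d ≤ (R ((l*va + m*vb)^(1/p)))^p := by
        calc l*c + m*d = l * (R (va^(1/p)))^p + m * (R (vb^(1/p)))^p := by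
              rw [hvac, hvbd]
          _ ≤ (R ((l*va + m*vb)^(1/p)))^p := hkey va vb l m hva hvb hl hm hlm
      have h2 := hψmono (l*c + m*d) _ (by positivity) h1
      rw [hHinv _ hpos] at h2
      have h3 : φ (c^(1/p)) = va := by rw [← hvac]; exact hHinv va hva
      have h4 : φ (d^(1/p)) = vb := by rw [← hvbd]; exact hHinv vb hvb
      rw [h3, h4]
      exact h2
end

section
/- Suppose 1≤p<q<∞ and for some concave quasi-concave function ρ the function φ satisfies φ^{-1}(u) = u^{1/p} ρ(u^{1/q-1/p}) for all u>0 (i.e., φ is the inverse on (0,∞) of the function u ↦ u^{1/p} ρ(u^{1/q-1/p})). Then φ is convex on [0,∞) and there exists a quasi-concave function h such that φ(u) = u^q h(u^{p-q}) for all u>0. -/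
open Set

lemma rho_mono {ρ : ℝ → ℝ} (hρ : QuasiConcave ρ) {s t : ℝ} (hs : 0 < s) (hst : s ≤ t) :
    ρ s ≤ ρ t := by
  have := hρ.2.2.2 s t hs (hs.trans_le hst)
  have h1 : max 1 (s / t) = 1 := max_eq_left (by
    rw [div_le_one (hs.trans_le hst)]; exact hst)
  rw [h1, one_mul] at this; exact this

lemma rho_div {ρ : ℝ → ℝ} (hρ : QuasiConcave ρ) {s t : ℝ} (hs : 0 < s) (hst : s ≤ t) :
    ρ t ≤ (t / s) * ρ s := by
  have := hρ.2.2.2 t s (hs.trans_le hst) hs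
  have h1 : max 1 (t / s) = t / s := max_eq_right (by
    rw [le_div_iff₀ hs]; simpa using hst)
  rwa [h1] at this

/-- Lower and upper growth bounds for `ψ u = u^(1/p) ρ(u^(1/q-1/p))`. -/
lemma psi_bounds {p q : ℝ} (hp : 1 ≤ p) (hpq : p < q) {ρ : ℝ → ℝ} (hρ : QuasiConcave ρ)
    {u v : ℝ} (hu : 0 < u) (huv : u ≤ v) :
    (v/u) ^ (1/q) * (u ^ (1/p) * ρ (u ^ (1/q-1/p))) ≤ v ^ (1/p) * ρ (v ^ (1/q-1/p)) ∧
    v ^ (1/p) * ρ (v ^ (1/q-1/p)) ≤ (v/u) ^ (1/p) * (u ^ (1/p) * ρ (u ^ (1/q-1/p))) := by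
  have hq1 : (1:ℝ) < q := lt_of_le_of_lt hp hpq
  have hp0 : (0:ℝ) < p := lt_of_lt_of_le one_pos hp
  have hq0 : (0:ℝ) < q := lt_trans one_pos hq1
  have hv : 0 < v := lt_of_lt_of_le hu huv
  have hr : 1/q - 1/p ≤ 0 := by
    have : 1/q ≤ 1/p := by
      apply one_div_le_one_div_of_le hp0 hpq.le
    linarith
  have hur : 0 < u ^ (1/q-1/p) := Real.rpow_pos_of_pos hu _
  have hvr : 0 < v ^ (1/q-1/p) := Real.rpow_pos_of_pos hv _
  have hvu : v ^ (1/q-1/p) ≤ u ^ (1/q-1/p) := Real.rpow_le_rpow_of_nonpos hu huv hr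
  have hsplit : ∀ z : ℝ, v ^ z = (v/u) ^ z * u ^ z := by
    intro z
    rw [← Real.mul_rpow (by positivity) hu.le, div_mul_cancel₀ _ hu.ne']
  constructor
  · -- lower bound
    have h1 : ρ (u ^ (1/q-1/p)) ≤ (u ^ (1/q-1/p) / v ^ (1/q-1/p)) * ρ (v ^ (1/q-1/p)) :=
      rho_div hρ hvr hvu
    have h2 : u ^ (1/q-1/p) / v ^ (1/q-1/p) = (v/u) ^ (-(1/q-1/p)) := by
      rw [Real.rpow_neg (by positivity), Real.div_rpow hv.le hu.le, inv_div]
    rw [h2] at h1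
    have key : (v/u) ^ (1/q) * u ^ (1/p) * ρ (u ^ (1/q-1/p))
        ≤ (v/u) ^ (1/q) * u ^ (1/p) * ((v/u) ^ (-(1/q-1/p)) * ρ (v ^ (1/q-1/p))) := by
      apply mul_le_mul_of_nonneg_left h1 (by positivity)
    calc (v/u) ^ (1/q) * (u ^ (1/p) * ρ (u ^ (1/q-1/p)))
        = (v/u) ^ (1/q) * u ^ (1/p) * ρ (u ^ (1/q-1/p)) := by ring
      _ ≤ (v/u) ^ (1/q) * u ^ (1/p) * ((v/u) ^ (-(1/q-1/p)) * ρ (v ^ (1/q-1/p))) := key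
      _ = ((v/u) ^ (1/q) * (v/u) ^ (-(1/q-1/p))) * u ^ (1/p) * ρ (v ^ (1/q-1/p)) := by ring
      _ = (v/u) ^ (1/p) * u ^ (1/p) * ρ (v ^ (1/q-1/p)) := by
          rw [← Real.rpow_add (by positivity)]; ring_nf
      _ = v ^ (1/p) * ρ (v ^ (1/q-1/p)) := by rw [← hsplit]
  · -- upper bound
    have h1 : ρ (v ^ (1/q-1/p)) ≤ ρ (u ^ (1/q-1/p)) := rho_mono hρ hvr hvu
    calc v ^ (1/p) * ρ (v ^ (1/q-1/p))
        ≤ v ^ (1/p) * ρ (u ^ (1/q-1/p)) := by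
          apply mul_le_mul_of_nonneg_left h1 (by positivity)
      _ = (v/u) ^ (1/p) * (u ^ (1/p) * ρ (u ^ (1/q-1/p))) := by rw [hsplit (1/p)]; ring

lemma psi_concave_core {p q : ℝ} (hp : 1 ≤ p) (hpq : p < q) {ρ : ℝ → ℝ} (hρ : QuasiConcave ρ)
    (hρconc : ConcaveOn ℝ (Set.Ici 0) ρ)
    {u v a b : ℝ} (hu : 0 < u) (huv : u < v) (ha : 0 < a) (hb : 0 < b) (hab : a + b = 1) :
    a * (u ^ (1/p) * ρ (u ^ (1/q-1/p))) + b * (v ^ (1/p) * ρ (v ^ (1/q-1/p)))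
      ≤ (a*u+b*v) ^ (1/p) * ρ ((a*u+b*v) ^ (1/q-1/p)) := by
  have hq1 : (1:ℝ) < q := lt_of_le_of_lt hp hpq
  have hp0 : (0:ℝ) < p := lt_of_lt_of_le one_pos hp
  have hq0 : (0:ℝ) < q := lt_trans one_pos hq1
  have hr : 1/q - 1/p < 0 := by
    have : 1/q < 1/p := one_div_lt_one_div_of_lt hp0 hpq
    linarith
  have hv : 0 < v := hu.trans huv
  set r := 1/q - 1/p with hrdef
  set w := a*u+b*v with hw
  have ha1 : a < 1 := by linarith
  have huw : u < w := by nlinarith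
  have hwv : w < v := by nlinarith
  have hw0 : 0 < w := hu.trans huw
  set t0 := w ^ r with ht0
  set t1 := v ^ r with ht1
  set t2 := u ^ r with ht2
  have h10 : t1 < t0 := Real.rpow_lt_rpow_of_neg hw0 hwv hr
  have h02 : t0 < t2 := Real.rpow_lt_rpow_of_neg hu huw hr
  have ht0p : 0 < t0 := Real.rpow_pos_of_pos hw0 _
  have ht1p : 0 < t1 := Real.rpow_pos_of_pos hv _
  set d := (ρ t2 - ρ t0) / (t2 - t0) with hd
  have hd0 : 0 ≤ d := div_nonneg (by linarith [rho_mono hρ ht0p h02.le]) (by linarith)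
  have hslope : d ≤ (ρ t0 - ρ 0) / (t0 - 0) := by
    exact hρconc.slope_anti_adjacent (le_refl (0:ℝ)) (by exact le_of_lt (ht0p.trans h02) : (0:ℝ) ≤ t2) ht0p h02
  have hdt0 : d * t0 ≤ ρ t0 := by
    have h0 := hρ.2.2.1
    have : d * t0 ≤ (ρ t0 - ρ 0) / t0 * t0 := by
      apply mul_le_mul_of_nonneg_right _ ht0p.le
      simpa using hslope
    rw [div_mul_cancel₀ _ ht0p.ne'] at this
    linarith
  have key2 : ρ t2 = ρ t0 + d * (t2 - t0) := by
    rw [hd, div_mul_cancel₀ _ (sub_ne_zero.mpr h02.ne')]; ring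
  have key1 : ρ t1 ≤ ρ t0 + d * (t1 - t0) := by
    have hsl : d ≤ (ρ t0 - ρ t1) / (t0 - t1) :=
      hρconc.slope_anti_adjacent ht1p.le (le_of_lt (ht0p.trans h02)) h10 h02
    have : d * (t0 - t1) ≤ ρ t0 - ρ t1 := by
      have := mul_le_mul_of_nonneg_right hsl (by linarith : (0:ℝ) ≤ t0 - t1)
      rwa [div_mul_cancel₀ _ (sub_ne_zero.mpr h10.ne')] at this
    linarith
  have hAc : a * u ^ (1/p) + b * v ^ (1/p) ≤ w ^ (1/p) := by
    have hcc := Real.concaveOn_rpow (by positivity : (0:ℝ) ≤ 1/p)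
      (by rw [div_le_one hp0]; exact hp : 1/p ≤ 1)
    have := hcc.2 (mem_Ici.2 hu.le) (mem_Ici.2 hv.le) ha.le hb.le hab
    simpa [smul_eq_mul] using this
  have hBc : a * u ^ (1/q) + b * v ^ (1/q) ≤ w ^ (1/q) := by
    have hcc := Real.concaveOn_rpow (by positivity : (0:ℝ) ≤ 1/q)
      (by rw [div_le_one hq0]; linarith : 1/q ≤ 1)
    have := hcc.2 (mem_Ici.2 hu.le) (mem_Ici.2 hv.le) ha.le hb.le hab
    simpa [smul_eq_mul] using this
  have hu_split : u ^ (1/p) * t2 = u ^ (1/q) := by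
    rw [ht2, ← Real.rpow_add hu, hrdef]; ring_nf
  have hv_split : v ^ (1/p) * t1 = v ^ (1/q) := by
    rw [ht1, ← Real.rpow_add hv, hrdef]; ring_nf
  have hw_split : w ^ (1/p) * t0 = w ^ (1/q) := by
    rw [ht0, ← Real.rpow_add hw0, hrdef]; ring_nf
  have hup : 0 < u ^ (1/p) := Real.rpow_pos_of_pos hu _
  have hvp : 0 < v ^ (1/p) := Real.rpow_pos_of_pos hv _
  have hwp : 0 < w ^ (1/p) := Real.rpow_pos_of_pos hw0 _
  have c0 : 0 ≤ ρ t0 - d * t0 := by linarith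
  calc a * (u ^ (1/p) * ρ t2) + b * (v ^ (1/p) * ρ t1)
      ≤ a * (u ^ (1/p) * (ρ t0 + d * (t2 - t0))) + b * (v ^ (1/p) * (ρ t0 + d * (t1 - t0))) := by
        rw [key2]
        exact add_le_add le_rfl
          (mul_le_mul_of_nonneg_left (mul_le_mul_of_nonneg_left key1 hvp.le) hb.le)
    _ = (ρ t0 - d * t0) * (a * u ^ (1/p) + b * v ^ (1/p))
          + d * (a * (u ^ (1/p) * t2) + b * (v ^ (1/p) * t1)) := by ring
    _ = (ρ t0 - d * t0) * (a * u ^ (1/p) + b * v ^ (1/p))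
          + d * (a * u ^ (1/q) + b * v ^ (1/q)) := by rw [hu_split, hv_split]
    _ ≤ (ρ t0 - d * t0) * w ^ (1/p) + d * w ^ (1/q) := by
        have h1 := mul_le_mul_of_nonneg_left hAc c0
        have h2 := mul_le_mul_of_nonneg_left hBc hd0
        linarith
    _ = w ^ (1/p) * ρ t0 := by rw [← hw_split]; ring

/-- Two-point concavity of `ψ` on `(0,∞)`, all boundary cases. -/
lemma psi_concave2 {p q : ℝ} (hp : 1 ≤ p) (hpq : p < q) {ρ : ℝ → ℝ} (hρ : QuasiConcave ρ)
    (hρconc : ConcaveOn ℝ (Set.Ici 0) ρ)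
    {u v a b : ℝ} (hu : 0 < u) (hv : 0 < v) (ha : 0 ≤ a) (hb : 0 ≤ b) (hab : a + b = 1) :
    a * (u ^ (1/p) * ρ (u ^ (1/q-1/p))) + b * (v ^ (1/p) * ρ (v ^ (1/q-1/p)))
      ≤ (a*u+b*v) ^ (1/p) * ρ ((a*u+b*v) ^ (1/q-1/p)) := by
  rcases eq_or_lt_of_le ha with ha0 | ha
  · have hb1 : b = 1 := by linarith
    simp [← ha0, hb1]
  rcases eq_or_lt_of_le hb with hb0 | hb
  · have ha1 : a = 1 := by linarith
    simp [← hb0, ha1]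
  rcases lt_trichotomy u v with huv | huv | huv
  · exact psi_concave_core hp hpq hρ hρconc hu huv ha hb hab
  · subst huv
    have h1 : a*u+b*u = u := by nlinarith
    rw [h1, ← add_mul, hab, one_mul]
  · have := psi_concave_core hp hpq hρ hρconc hv huv hb ha (by linarith)
    have h1 : b*v+a*u = a*u+b*v := by ring
    rw [h1] at this; linarith

theorem stmt5 (p q : ℝ) (hp : 1 ≤ p) (hpq : p < q)
    (ρ : ℝ → ℝ) (hρ : QuasiConcave ρ) (hρconc : ConcaveOn ℝ (Set.Ici 0) ρ)
    (φ : ℝ → ℝ) (hφ0 : φ 0 = 0)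
    -- `φ` is the inverse on `(0,∞)` of `u ↦ u^{1/p} ρ(u^{1/q - 1/p})`
    (hinv : ∀ u : ℝ, 0 < u → φ (u ^ (1/p) * ρ (u ^ (1/q - 1/p))) = u) :
    ConvexOn ℝ (Set.Ici 0) φ ∧
      ∃ h : ℝ → ℝ, QuasiConcave h ∧ ∀ u : ℝ, 0 < u → φ u = u ^ q * h (u ^ (p - q)) := by
  have hq1 : (1:ℝ) < q := lt_of_le_of_lt hp hpq
  have hp0 : (0:ℝ) < p := lt_of_lt_of_le one_pos hp
  have hq0 : (0:ℝ) < q := lt_trans one_pos hq1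
  set ψ : ℝ → ℝ := fun u => u ^ (1/p) * ρ (u ^ (1/q-1/p)) with hψdef
  have hψapp : ∀ u : ℝ, ψ u = u ^ (1/p) * ρ (u ^ (1/q-1/p)) := fun u => rfl
  have hinv' : ∀ u : ℝ, 0 < u → φ (ψ u) = u := hinv
  have hψpos : ∀ u : ℝ, 0 < u → 0 < ψ u := fun u hu => by
    have := hρ.2.1 _ (Real.rpow_pos_of_pos hu (1/q-1/p))
    positivity
  -- strict monotonicity of ψ
  have hψmono : ∀ u v : ℝ, 0 < u → u < v → ψ u < ψ v := by
    intro u v hu huv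
    have hlow := (psi_bounds hp hpq hρ hu huv.le).1
    rw [← hψapp u, ← hψapp v] at hlow
    have h1 : (1:ℝ) < (v/u) ^ (1/q) := by
      refine (Real.one_lt_rpow_iff_of_pos (div_pos (hu.trans huv) hu)).2
        (Or.inl ⟨?_, by positivity⟩)
      rw [lt_div_iff₀ hu]; simpa using huv
    calc ψ u < (v/u) ^ (1/q) * ψ u := by
          nlinarith [hψpos u hu]
      _ ≤ ψ v := hlow
  have hψle : ∀ u v : ℝ, 0 < u → 0 < v → ψ u ≤ ψ v → u ≤ v := by
    intro u v hu hv hle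
    by_contra hlt
    exact absurd hle (not_le.2 (hψmono v u hv (not_le.1 hlt)))
  -- continuity of ψ
  have hrpowcont : ∀ z : ℝ, ContinuousOn (fun x : ℝ => x ^ z) (Ioi 0) := by
    intro z x hx
    exact (Real.continuousAt_rpow_const x z (Or.inl (ne_of_gt hx))).continuousWithinAt
  have hψcont : ContinuousOn ψ (Ioi 0) := by
    apply ContinuousOn.mul (hrpowcont (1/p))
    exact hρ.1.comp (hrpowcont (1/q-1/p))
      (fun x hx => mem_Ioi.2 (Real.rpow_pos_of_pos hx _))
  -- surjectivity of ψ onto (0,∞)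
  have hψ1 : ψ 1 = ρ 1 := by simp [hψdef]
  have hK : 0 < ρ 1 := hρ.2.1 1 one_pos
  have hsurj : ∀ x : ℝ, 0 < x → ∃ u : ℝ, 0 < u ∧ ψ u = x := by
    intro x hx
    set c := (x / ρ 1) ^ q with hc
    have hc0 : 0 < c := Real.rpow_pos_of_pos (by positivity) _
    set A := min 1 c with hA
    set B := max 1 c with hB
    have hA0 : 0 < A := lt_min one_pos hc0
    have hAB : A ≤ B := (min_le_left _ _).trans (le_max_left _ _)
    have hcq : c ^ (1/q) = x / ρ 1 := by
      rw [hc, ← Real.rpow_mul (by positivity), mul_one_div, div_self hq0.ne', Real.rpow_one]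
    have hψA : ψ A ≤ x := by
      have hlow := (psi_bounds hp hpq hρ hA0 (min_le_left 1 c)).1
      rw [← hψapp A, ← hψapp 1, hψ1] at hlow
      have h2 : (1/A) ^ (1/q) * ψ A ≤ ρ 1 := by
        simpa using hlow
      have h3 : ψ A ≤ A ^ (1/q) * ρ 1 := by
        have hAq : (1/A) ^ (1/q) = (A ^ (1/q))⁻¹ := by
          rw [one_div, ← Real.rpow_neg_one A, ← Real.rpow_mul hA0.le, ← Real.rpow_neg hA0.le]
          ring_nf
        rw [hAq] at h2
        have hApq : 0 < A ^ (1/q) := Real.rpow_pos_of_pos hA0 _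
        calc ψ A = A ^ (1/q) * ((A ^ (1/q))⁻¹ * ψ A) := by
              field_simp
          _ ≤ A ^ (1/q) * ρ 1 := mul_le_mul_of_nonneg_left h2 hApq.le
      have h4 : A ^ (1/q) ≤ x / ρ 1 := by
        rw [← hcq]
        exact Real.rpow_le_rpow hA0.le (min_le_right 1 c) (by positivity)
      calc ψ A ≤ A ^ (1/q) * ρ 1 := h3
        _ ≤ (x / ρ 1) * ρ 1 := mul_le_mul_of_nonneg_right h4 hK.le
        _ = x := by field_simp
    have hψB : x ≤ ψ B := by
      have hlow := (psi_bounds hp hpq hρ one_pos (le_max_left 1 c)).1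
      rw [← hψapp B, ← hψapp 1, hψ1] at hlow
      have h2 : B ^ (1/q) * ρ 1 ≤ ψ B := by simpa using hlow
      have h4 : x / ρ 1 ≤ B ^ (1/q) := by
        rw [← hcq]
        exact Real.rpow_le_rpow hc0.le (le_max_right 1 c) (by positivity)
      calc x = (x / ρ 1) * ρ 1 := by field_simp
        _ ≤ B ^ (1/q) * ρ 1 := mul_le_mul_of_nonneg_right h4 hK.le
        _ ≤ ψ B := h2
    have hsub : Icc A B ⊆ Ioi 0 := fun y hy => lt_of_lt_of_le hA0 hy.1
    have := intermediate_value_Icc hAB (hψcont.mono hsub)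
    obtain ⟨u, hu, hux⟩ := this ⟨hψA, hψB⟩
    exact ⟨u, lt_of_lt_of_le hA0 hu.1, hux⟩
  -- φ is a genuine inverse
  have hφ : ∀ x : ℝ, 0 < x → 0 < φ x ∧ ψ (φ x) = x := by
    intro x hx
    obtain ⟨u, hu, hux⟩ := hsurj x hx
    have : φ x = u := by rw [← hux]; exact hinv' u hu
    rw [this]; exact ⟨hu, hux⟩
  have hφmono : ∀ x y : ℝ, 0 < x → x ≤ y → φ x ≤ φ y := by
    intro x y hx hxy
    have hy : 0 < y := lt_of_lt_of_le hx hxy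
    have h1 := (hφ x hx).2
    have h2 := (hφ y hy).2
    apply hψle _ _ (hφ x hx).1 (hφ y hy).1
    rw [h1, h2]; exact hxy
  -- scaling fact : ψ (c * u) ≥ c * ψ u for c ∈ (0,1]
  have hscale : ∀ c u : ℝ, 0 < c → c ≤ 1 → 0 < u → c * ψ u ≤ ψ (c * u) := by
    intro c u hc hc1 hu
    have hcu : 0 < c * u := by positivity
    have hcuu : c * u ≤ u := by nlinarith
    have hup := (psi_bounds hp hpq hρ hcu hcuu).2
    rw [← hψapp (c*u), ← hψapp u] at hup
    have hdiv : u / (c * u) = 1/c := by field_simp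
    rw [hdiv] at hup
    have h1c : (1/c) ^ (1/p) ≤ 1/c := by
      have h1 : (1:ℝ) ≤ 1/c := one_le_one_div hc hc1
      calc (1/c) ^ (1/p) ≤ (1/c) ^ (1:ℝ) :=
            Real.rpow_le_rpow_of_exponent_le h1 (by rw [div_le_one hp0]; exact hp)
        _ = 1/c := Real.rpow_one _
    have hcupos := hψpos (c*u) hcu
    have : ψ u ≤ (1/c) * ψ (c*u) := by
      calc ψ u ≤ (1/c) ^ (1/p) * ψ (c*u) := hup
        _ ≤ (1/c) * ψ (c*u) := mul_le_mul_of_nonneg_right h1c hcupos.le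
    have h2 := mul_le_mul_of_nonneg_left this hc.le
    have h3 : c * ((1/c) * ψ (c*u)) = ψ (c*u) := by field_simp
    linarith
  -- φ(c y) ≤ c φ(y) for 0 < c ≤ 1
  have hkey : ∀ c y : ℝ, 0 < c → c ≤ 1 → 0 < y → φ (c * y) ≤ c * φ y := by
    intro c y hc hc1 hy
    have hv := (hφ y hy).1
    have hcy : 0 < c * y := by positivity
    have h1 : ψ (φ (c*y)) = c * y := (hφ (c*y) hcy).2
    have h2 : c * y ≤ ψ (c * φ y) := by
      have := hscale c (φ y) hc hc1 hv
      rwa [(hφ y hy).2] at this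
    exact hψle _ _ (hφ (c*y) hcy).1 (by positivity) (by rw [h1]; exact h2)
  -- convexity
  have hconv : ConvexOn ℝ (Set.Ici 0) φ := by
    refine ⟨convex_Ici 0, ?_⟩
    rintro x hx y hy a b ha hb hab
    simp only [smul_eq_mul]
    rcases eq_or_lt_of_le ha with ha0 | ha
    · have hb1 : b = 1 := by linarith
      simp [← ha0, hb1]
    rcases eq_or_lt_of_le hb with hb0 | hb
    · have ha1 : a = 1 := by linarith
      simp [← hb0, ha1]
    rcases eq_or_lt_of_le (mem_Ici.1 hx) with hx0 | hx0
    · rcases eq_or_lt_of_le (mem_Ici.1 hy) with hy0 | hy0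
      · rw [← hx0, ← hy0]; simp [hφ0]
      · rw [← hx0]
        have e : a*(0:ℝ) + b*y = b*y := by ring
        rw [e, hφ0, mul_zero, zero_add]
        exact hkey b y hb (by linarith) hy0
    · rcases eq_or_lt_of_le (mem_Ici.1 hy) with hy0 | hy0
      · rw [← hy0]
        have e : a*x + b*(0:ℝ) = a*x := by ring
        rw [e, hφ0, mul_zero, add_zero]
        exact hkey a x ha (by linarith) hx0
      · -- both positive
        have hu := (hφ x hx0).1
        have hv := (hφ y hy0).1
        have hcc := psi_concave2 hp hpq hρ hρconc hu hv ha.le hb.le hab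
        rw [← hψapp (φ x), ← hψapp (φ y), ← hψapp (a*(φ x)+b*(φ y)),
          (hφ x hx0).2, (hφ y hy0).2] at hcc
        have hxy : 0 < a*x+b*y := by positivity
        exact hψle (φ (a*x+b*y)) (a*(φ x)+b*(φ y)) (hφ _ hxy).1 (by positivity)
          (by rw [(hφ _ hxy).2]; exact hcc)
  have hb1 : True := trivial
  refine ⟨hconv, ?_⟩
  -- continuity of φ on (0,∞)
  have hφcont : ContinuousOn φ (Ioi 0) := by
    have h1 : ConvexOn ℝ (Ioi 0) φ := hconv.subset Ioi_subset_Ici_self (convex_Ioi 0)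
    exact h1.continuousOn isOpen_Ioi
  -- monotonicity facts for φ(x)/x^p and φ(x)/x^q
  have hM1 : ∀ x y : ℝ, 0 < x → x ≤ y → φ x * y ^ p ≤ φ y * x ^ p := by
    intro x y hx hxy
    have hy : 0 < y := lt_of_lt_of_le hx hxy
    have hu := (hφ x hx).1
    have hv := (hφ y hy).1
    have huv : φ x ≤ φ y := hφmono x y hx hxy
    have hup := (psi_bounds hp hpq hρ hu huv).2
    rw [← hψapp (φ x), ← hψapp (φ y), (hφ x hx).2, (hφ y hy).2] at hup
    -- hup : y ≤ (φ y / φ x) ^ (1/p) * x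
    have h2 : y ^ p ≤ (φ y / φ x) * x ^ p := by
      have h3 := Real.rpow_le_rpow hy.le hup hp0.le
      rwa [Real.mul_rpow (by positivity) hx.le, ← Real.rpow_mul (by positivity),
        one_div_mul_cancel hp0.ne', Real.rpow_one] at h3
    have h4 := mul_le_mul_of_nonneg_left h2 hu.le
    have h5 : φ x * ((φ y / φ x) * x ^ p) = φ y * x ^ p := by field_simp
    linarith
  have hM2 : ∀ x y : ℝ, 0 < x → x ≤ y → φ y * x ^ q ≤ φ x * y ^ q := by
    intro x y hx hxy
    have hy : 0 < y := lt_of_lt_of_le hx hxy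
    have hu := (hφ x hx).1
    have hv := (hφ y hy).1
    have huv : φ x ≤ φ y := hφmono x y hx hxy
    have hlow := (psi_bounds hp hpq hρ hu huv).1
    rw [← hψapp (φ x), ← hψapp (φ y), (hφ x hx).2, (hφ y hy).2] at hlow
    -- hlow : (φ y / φ x) ^ (1/q) * x ≤ y
    have h2 : (φ y / φ x) * x ^ q ≤ y ^ q := by
      have h3 := Real.rpow_le_rpow (by positivity) hlow hq0.le
      rwa [Real.mul_rpow (by positivity) hx.le, ← Real.rpow_mul (by positivity),
        one_div_mul_cancel hq0.ne', Real.rpow_one] at h3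
    have h4 := mul_le_mul_of_nonneg_left h2 hu.le
    have h5 : φ x * ((φ y / φ x) * x ^ q) = φ y * x ^ q := by field_simp
    linarith
  -- the function h
  have hqp : (0:ℝ) < q - p := by linarith
  have hpq0 : p - q < 0 := by linarith
  have hpqne : p - q ≠ 0 := by linarith
  set h : ℝ → ℝ := fun s => s ^ (q/(q-p)) * φ (s ^ (1/(p-q))) with hhdef
  have hhapp : ∀ s : ℝ, h s = s ^ (q/(q-p)) * φ (s ^ (1/(p-q))) := fun s => rfl
  have hxs : ∀ s : ℝ, 0 < s → 0 < s ^ (1/(p-q)) := fun s hs => Real.rpow_pos_of_pos hs _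
  have hhpos : ∀ s : ℝ, 0 < s → 0 < h s := by
    intro s hs
    have := (hφ _ (hxs s hs)).1
    have h1 : 0 < s ^ (q/(q-p)) := Real.rpow_pos_of_pos hs _
    rw [hhapp]; positivity
  -- h s as φ(x)/x^q and s * (φ(x)/x^p)
  have hrepq : ∀ s : ℝ, 0 < s →
      h s = φ (s ^ (1/(p-q))) / (s ^ (1/(p-q))) ^ q := by
    intro s hs
    rw [hhapp]
    have e1 : (s ^ (1/(p-q))) ^ q = s ^ (q/(p-q)) := by
      rw [← Real.rpow_mul hs.le]; congr 1; field_simp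
    have e2 : s ^ (q/(q-p)) = (s ^ (q/(p-q)))⁻¹ := by
      rw [← Real.rpow_neg hs.le]; congr 1; field_simp; ring
    rw [e1, e2, inv_mul_eq_div]
  have hrepp : ∀ s : ℝ, 0 < s →
      h s = s * (φ (s ^ (1/(p-q))) / (s ^ (1/(p-q))) ^ p) := by
    intro s hs
    rw [hhapp]
    have e1 : (s ^ (1/(p-q))) ^ p = s ^ (p/(p-q)) := by
      rw [← Real.rpow_mul hs.le]; congr 1; field_simp
    have e2 : s ^ (q/(q-p)) = s * (s ^ (p/(p-q)))⁻¹ := by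
      rw [← Real.rpow_neg hs.le]
      have e3 : s ^ (q/(q-p)) = s ^ ((1:ℝ) + -(p/(p-q))) := by
        congr 1; field_simp; ring
      rw [e3, Real.rpow_add hs, Real.rpow_one]
    rw [e1, e2]; ring
  -- monotonicity statements for h
  have hS1 : ∀ s t : ℝ, 0 < s → s ≤ t → h s ≤ h t := by
    intro s t hs hst
    have ht : 0 < t := lt_of_lt_of_le hs hst
    set x := s ^ (1/(p-q)) with hxdef
    set y := t ^ (1/(p-q)) with hydef
    have hx : 0 < x := hxs s hs
    have hy : 0 < y := hxs t ht
    have hyx : y ≤ x := Real.rpow_le_rpow_of_nonpos hs hst (by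
      rw [one_div]; exact (inv_nonpos.2 hpq0.le))
    have hm := hM2 y x hy hyx
    rw [hrepq s hs, hrepq t ht, ← hxdef, ← hydef,
      div_le_div_iff₀ (by positivity) (by positivity)]
    linarith
  have hS2 : ∀ s t : ℝ, 0 < t → t ≤ s → h s ≤ (s/t) * h t := by
    intro s t ht hts
    have hs : 0 < s := lt_of_lt_of_le ht hts
    set x := s ^ (1/(p-q)) with hxdef
    set y := t ^ (1/(p-q)) with hydef
    have hx : 0 < x := hxs s hs
    have hy : 0 < y := hxs t ht
    have hxy : x ≤ y := Real.rpow_le_rpow_of_nonpos ht hts (by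
      rw [one_div]; exact (inv_nonpos.2 hpq0.le))
    have hm := hM1 x y hx hxy
    have hdiv : φ x / x ^ p ≤ φ y / y ^ p := by
      rw [div_le_div_iff₀ (by positivity) (by positivity)]; linarith
    calc h s = s * (φ x / x ^ p) := hrepp s hs
      _ ≤ s * (φ y / y ^ p) := mul_le_mul_of_nonneg_left hdiv hs.le
      _ = (s/t) * (t * (φ y / y ^ p)) := by field_simp
      _ = (s/t) * h t := by rw [← hrepp t ht]
  refine ⟨h, ⟨?_, ?_, ?_, ?_⟩, ?_⟩
  · -- continuity
    rw [hhdef]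
    apply ContinuousOn.mul (hrpowcont (q/(q-p)))
    exact hφcont.comp (hrpowcont (1/(p-q)))
      (fun s hs => mem_Ioi.2 (Real.rpow_pos_of_pos hs _))
  · exact hhpos
  · -- h 0 ≥ 0
    rw [hhapp, Real.zero_rpow (by positivity : q/(q-p) ≠ 0), zero_mul]
  · -- quasi-concavity inequality
    intro s t hs ht
    rcases le_total s t with hst | hst
    · calc h s ≤ h t := hS1 s t hs hst
        _ ≤ max 1 (s/t) * h t :=
          le_mul_of_one_le_left (hhpos t ht).le (le_max_left _ _)
    · calc h s ≤ (s/t) * h t := hS2 s t ht hst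
        _ ≤ max 1 (s/t) * h t :=
          mul_le_mul_of_nonneg_right (le_max_right _ _) (hhpos t ht).le
  · -- the formula
    intro u hu
    rw [hhapp]
    have e1 : (u ^ (p-q)) ^ (q/(q-p)) = u ^ (-q) := by
      rw [← Real.rpow_mul hu.le]; congr 1; field_simp; ring
    have e2 : (u ^ (p-q)) ^ (1/(p-q)) = u := by
      rw [← Real.rpow_mul hu.le, mul_one_div, div_self hpqne, Real.rpow_one]
    rw [e1, e2, ← mul_assoc, ← Real.rpow_add hu, add_neg_cancel, Real.rpow_zero, one_mul]
end

section
/- Let 1≤p<∞ and 1<q<∞. Then the Sparr constant satisfies γ_{p,q} = inf{ x + ((p/q)·x^{p-1})^{1/(q-1)} : x ≥ 0 and x^p + ((p/q)·x^{p-1})^{q/(q-1)} = 1 }. In particular, γ_{q,q} = 2^{1-1/q} and γ_{1,q} = 1 + q^{1/(1-q)} − q^{q/(1-q)}. -/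
open Real

/-- The Sparr constant `γ_{p,q} = inf{γ > 0 : inf_{x+y=γ, x,y ≥ 0} (x^p + y^q) = 1}`. -/
noncomputable def sparr (p q : ℝ) : ℝ :=
  sInf {γ : ℝ | 0 < γ ∧
    sInf {v : ℝ | ∃ x y : ℝ, 0 ≤ x ∧ 0 ≤ y ∧ x + y = γ ∧ v = x ^ p + y ^ q} = 1}

lemma tangent_ineq {r s t : ℝ} (hr : 1 ≤ r) (hs : 0 ≤ s) (ht : 0 ≤ t) :
    s ^ r + r * s ^ (r - 1) * (t - s) ≤ t ^ r := by
  rcases hs.eq_or_lt with rfl | hs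
  · rcases hr.eq_or_lt with rfl | hr
    · simp
    · rw [Real.zero_rpow (by linarith), Real.zero_rpow (by linarith)]
      simpa using Real.rpow_nonneg ht r
  · have hu : -1 ≤ t / s - 1 := by
      have : 0 ≤ t / s := div_nonneg ht hs.le
      linarith
    have hb := one_add_mul_self_le_rpow_one_add hu hr
    have h1 : 1 + (t / s - 1) = t / s := by ring
    rw [h1, Real.div_rpow ht hs.le] at hb
    have hsr : 0 < s ^ r := Real.rpow_pos_of_pos hs r
    have hb2 : (1 + r * (t / s - 1)) * s ^ r ≤ t ^ r := by
      calc (1 + r * (t / s - 1)) * s ^ r ≤ (t ^ r / s ^ r) * s ^ r :=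
            mul_le_mul_of_nonneg_right hb hsr.le
        _ = t ^ r := div_mul_cancel₀ _ hsr.ne'
    have h3 : s ^ (r - 1) = s ^ r / s := by
      rw [Real.rpow_sub hs, Real.rpow_one]
    have key : (1 + r * (t / s - 1)) * s ^ r = s ^ r + r * (s ^ r / s) * (t - s) := by
      field_simp
    rw [h3]
    linarith [key ▸ hb2]

lemma crit_min {p q x y a b : ℝ} (hp : 1 ≤ p) (hq : 1 ≤ q)
    (hx : 0 ≤ x) (hy : 0 ≤ y) (ha : 0 ≤ a) (hb : 0 ≤ b) (hsum : a + b = x + y)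
    (hcrit : p * x ^ (p - 1) = q * y ^ (q - 1)) :
    x ^ p + y ^ q ≤ a ^ p + b ^ q := by
  have h1 := tangent_ineq hp hx ha
  have h2 := tangent_ineq hq hy hb
  rw [hcrit] at h1
  have h3 : q * y ^ (q - 1) * (a - x) + q * y ^ (q - 1) * (b - y) = 0 := by
    have h4 : (a - x) + (b - y) = 0 := by linarith
    calc q * y ^ (q - 1) * (a - x) + q * y ^ (q - 1) * (b - y)
        = q * y ^ (q - 1) * ((a - x) + (b - y)) := by ring
      _ = 0 := by rw [h4, mul_zero]
  linarith

lemma sinf_S {p q x y : ℝ} (hp : 1 ≤ p) (hq : 1 ≤ q) (hx : 0 ≤ x) (hy : 0 ≤ y)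
    (hcrit : p * x ^ (p - 1) = q * y ^ (q - 1)) :
    sInf {v : ℝ | ∃ a b : ℝ, 0 ≤ a ∧ 0 ≤ b ∧ a + b = x + y ∧ v = a ^ p + b ^ q}
      = x ^ p + y ^ q := by
  apply le_antisymm
  · refine csInf_le ⟨x ^ p + y ^ q, ?_⟩ ⟨x, y, hx, hy, rfl, rfl⟩
    rintro v ⟨a, b, ha, hb, hab, rfl⟩
    exact crit_min hp hq hx hy ha hb hab hcrit
  · refine le_csInf ⟨x ^ p + y ^ q, x, y, hx, hy, rfl, rfl⟩ ?_
    rintro v ⟨a, b, ha, hb, hab, rfl⟩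
    exact crit_min hp hq hx hy ha hb hab hcrit

lemma key_set_eq (p q : ℝ) (hp : 1 ≤ p) (hq : 1 < q) :
    {γ : ℝ | 0 < γ ∧
        sInf {v : ℝ | ∃ x y : ℝ, 0 ≤ x ∧ 0 ≤ y ∧ x + y = γ ∧ v = x ^ p + y ^ q} = 1} =
    {v : ℝ | ∃ x : ℝ, 0 ≤ x ∧
        x ^ p + ((p / q) * x ^ (p - 1)) ^ (q / (q - 1)) = 1 ∧
        v = x + ((p / q) * x ^ (p - 1)) ^ (1 / (q - 1))} := by
  have hq0 : (0:ℝ) < q := by linarith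
  have hp0 : (0:ℝ) < p := by linarith
  have hq1 : (0:ℝ) < q - 1 := by linarith
  have hcnn : ∀ x : ℝ, 0 ≤ x → 0 ≤ (p / q) * x ^ (p - 1) := fun x hx =>
    mul_nonneg (div_nonneg hp0.le hq0.le) (Real.rpow_nonneg hx _)
  have hYcrit : ∀ x : ℝ, 0 ≤ x →
      q * (((p / q) * x ^ (p - 1)) ^ (1 / (q - 1))) ^ (q - 1) = p * x ^ (p - 1) := by
    intro x hx
    rw [← Real.rpow_mul (hcnn x hx), one_div, inv_mul_cancel₀ hq1.ne', Real.rpow_one]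
    field_simp
  have hYq : ∀ x : ℝ, 0 ≤ x →
      (((p / q) * x ^ (p - 1)) ^ (1 / (q - 1))) ^ q
        = ((p / q) * x ^ (p - 1)) ^ (q / (q - 1)) := by
    intro x hx
    rw [← Real.rpow_mul (hcnn x hx)]
    congr 1; ring
  ext γ
  simp only [Set.mem_setOf_eq]
  constructor
  · rintro ⟨hγ, hinf⟩
    have hbdd : BddBelow {v : ℝ | ∃ x y : ℝ, 0 ≤ x ∧ 0 ≤ y ∧ x + y = γ ∧ v = x ^ p + y ^ q} := by
      refine ⟨0, ?_⟩
      rintro v ⟨a, b, ha, hb, _, rfl⟩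
      exact add_nonneg (Real.rpow_nonneg ha p) (Real.rpow_nonneg hb q)
    have h1γ : 1 ≤ γ := by
      have hle : sInf {v : ℝ | ∃ x y : ℝ, 0 ≤ x ∧ 0 ≤ y ∧ x + y = γ ∧ v = x ^ p + y ^ q}
          ≤ γ ^ p + (0:ℝ) ^ q := csInf_le hbdd ⟨γ, 0, hγ.le, le_refl 0, add_zero γ, rfl⟩
      rw [Real.zero_rpow hq0.ne', add_zero, hinf] at hle
      by_contra h
      push_neg at h
      have := Real.rpow_lt_one hγ.le h hp0
      linarith
    set ψ : ℝ → ℝ := fun x => x + ((p / q) * x ^ (p - 1)) ^ (1 / (q - 1)) with hψdef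
    have hcont : Continuous ψ := by
      apply continuous_id.add
      apply Continuous.rpow_const
      · exact continuous_const.mul (continuous_id.rpow_const fun x => Or.inr (by linarith))
      · intro x; exact Or.inr (by positivity)
    have hψ0 : ψ 0 ≤ γ := by
      rcases hp.eq_or_lt with hpe | hpl
      · have e0 : (0:ℝ) ^ (p - 1) = 1 := by rw [← hpe]; norm_num
        have : ψ 0 = (p / q) ^ (1 / (q - 1)) := by
          simp only [hψdef, e0, mul_one, zero_add]
        rw [this]
        have hlt : (p / q) ^ (1 / (q - 1)) < 1 := by
          apply Real.rpow_lt_one (by positivity) _ (by positivity)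
          rw [div_lt_one hq0, ← hpe]; exact hq
        linarith
      · have e0 : (0:ℝ) ^ (p - 1) = 0 := Real.zero_rpow (by linarith)
        have : ψ 0 = 0 := by
          simp only [hψdef, e0, mul_zero, zero_add]
          exact Real.zero_rpow (by positivity)
        rw [this]; linarith
    have hψγ : γ ≤ ψ γ := le_add_of_nonneg_right (Real.rpow_nonneg (hcnn γ hγ.le) _)
    obtain ⟨x, hxmem, hxγ⟩ :=
      intermediate_value_Icc (by linarith : (0:ℝ) ≤ γ) hcont.continuousOn ⟨hψ0, hψγ⟩
    have hx0 : 0 ≤ x := hxmem.1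
    have hy0 : 0 ≤ ((p / q) * x ^ (p - 1)) ^ (1 / (q - 1)) := Real.rpow_nonneg (hcnn x hx0) _
    have hsum : x + ((p / q) * x ^ (p - 1)) ^ (1 / (q - 1)) = γ := hxγ
    have hS := sinf_S hp hq.le hx0 hy0 (hYcrit x hx0).symm
    rw [hsum] at hS
    have hval : x ^ p + (((p / q) * x ^ (p - 1)) ^ (1 / (q - 1))) ^ q = 1 := by
      rw [← hS]; exact hinf
    refine ⟨x, hx0, ?_, hsum.symm⟩
    rw [← hYq x hx0]
    exact hval
  · rintro ⟨x, hx0, hcon, hv⟩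
    have hy0 : 0 ≤ ((p / q) * x ^ (p - 1)) ^ (1 / (q - 1)) := Real.rpow_nonneg (hcnn x hx0) _
    have hval : x ^ p + (((p / q) * x ^ (p - 1)) ^ (1 / (q - 1))) ^ q = 1 := by
      rw [hYq x hx0]; exact hcon
    constructor
    · rw [hv]
      rcases hx0.eq_or_lt with rfl | hx0'
      · rcases hy0.eq_or_lt with hy | hy
        · exfalso
          rw [← hy, Real.zero_rpow hp0.ne', Real.zero_rpow hq0.ne'] at hval
          norm_num at hval
        · linarith
      · linarith
    · rw [hv, sinf_S hp hq.le hx0 hy0 (hYcrit x hx0).symm]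
      exact hval

theorem stmt9 (p q : ℝ) (hp : 1 ≤ p) (hq : 1 < q) :
    sparr p q = sInf {v : ℝ | ∃ x : ℝ, 0 ≤ x ∧
        x ^ p + ((p / q) * x ^ (p - 1)) ^ (q / (q - 1)) = 1 ∧
        v = x + ((p / q) * x ^ (p - 1)) ^ (1 / (q - 1))} ∧
      sparr q q = 2 ^ (1 - 1 / q) ∧
      sparr 1 q = 1 + q ^ (1 / (1 - q)) - q ^ (q / (1 - q)) := by
  have hq0 : (0:ℝ) < q := by linarith
  have hq1 : (0:ℝ) < q - 1 := by linarith
  refine ⟨congrArg sInf (key_set_eq p q hp hq), ?_, ?_⟩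
  · have h1 := congrArg sInf (key_set_eq q q hq.le hq)
    rw [show sparr q q = sInf {γ : ℝ | 0 < γ ∧
        sInf {v : ℝ | ∃ x y : ℝ, 0 ≤ x ∧ 0 ≤ y ∧ x + y = γ ∧ v = x ^ q + y ^ q} = 1} from rfl, h1]
    have hset : {v : ℝ | ∃ x : ℝ, 0 ≤ x ∧
        x ^ q + ((q / q) * x ^ (q - 1)) ^ (q / (q - 1)) = 1 ∧
        v = x + ((q / q) * x ^ (q - 1)) ^ (1 / (q - 1))} = {(2:ℝ) ^ (1 - 1 / q)} := by
      ext v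
      simp only [Set.mem_setOf_eq, Set.mem_singleton_iff, div_self hq0.ne', one_mul]
      constructor
      · rintro ⟨x, hx0, hcon, rfl⟩
        have e2 : (x ^ (q - 1)) ^ (q / (q - 1)) = x ^ q := by
          rw [← Real.rpow_mul hx0]; congr 1; field_simp
        have e3 : (x ^ (q - 1)) ^ (1 / (q - 1)) = x := by
          rw [← Real.rpow_mul hx0, mul_one_div, div_self hq1.ne', Real.rpow_one]
        rw [e2] at hcon
        have hxq : x ^ q = 1 / 2 := by linarith
        have hxval : x = 2 ^ (-(1 / q)) := by
          calc x = (x ^ q) ^ (1 / q) := by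
                rw [← Real.rpow_mul hx0, mul_one_div, div_self hq0.ne', Real.rpow_one]
            _ = ((1:ℝ) / 2) ^ (1 / q) := by rw [hxq]
            _ = 2 ^ (-(1 / q)) := by
                rw [one_div (2:ℝ), Real.inv_rpow (by norm_num : (0:ℝ) ≤ 2),
                  ← Real.rpow_neg (by norm_num : (0:ℝ) ≤ 2)]
        rw [e3, hxval, show (1 - 1 / q : ℝ) = 1 + -(1 / q) by ring,
          Real.rpow_add (by norm_num : (0:ℝ) < 2), Real.rpow_one]
        ring
      · rintro rfl
        refine ⟨2 ^ (-(1 / q)), Real.rpow_nonneg (by norm_num) _, ?_, ?_⟩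
        · have hx0 : (0:ℝ) ≤ 2 ^ (-(1 / q)) := Real.rpow_nonneg (by norm_num) _
          have hxq : ((2:ℝ) ^ (-(1 / q))) ^ q = 1 / 2 := by
            rw [← Real.rpow_mul (by norm_num : (0:ℝ) ≤ 2),
              show -(1 / q) * q = -1 by field_simp, Real.rpow_neg_one]
            norm_num
          have e2 : (((2:ℝ) ^ (-(1 / q))) ^ (q - 1)) ^ (q / (q - 1))
              = ((2:ℝ) ^ (-(1 / q))) ^ q := by
            rw [← Real.rpow_mul hx0]; congr 1; field_simp
          rw [e2, hxq]; norm_num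
        · have hx0 : (0:ℝ) ≤ 2 ^ (-(1 / q)) := Real.rpow_nonneg (by norm_num) _
          have e3 : (((2:ℝ) ^ (-(1 / q))) ^ (q - 1)) ^ (1 / (q - 1))
              = (2:ℝ) ^ (-(1 / q)) := by
            rw [← Real.rpow_mul hx0, mul_one_div, div_self hq1.ne', Real.rpow_one]
          rw [e3, show (1 - 1 / q : ℝ) = 1 + -(1 / q) by ring,
            Real.rpow_add (by norm_num : (0:ℝ) < 2), Real.rpow_one]
          ring
    rw [hset, csInf_singleton]
  · have h1 := congrArg sInf (key_set_eq 1 q le_rfl hq)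
    rw [show sparr 1 q = sInf {γ : ℝ | 0 < γ ∧
        sInf {v : ℝ | ∃ x y : ℝ, 0 ≤ x ∧ 0 ≤ y ∧ x + y = γ ∧ v = x ^ (1:ℝ) + y ^ q} = 1}
        from rfl, h1]
    have einv : ∀ a : ℝ, ((1:ℝ) / q) ^ a = q ^ (-a) := fun a => by
      rw [one_div, Real.inv_rpow hq0.le, ← Real.rpow_neg hq0.le]
    have eexp1 : q ^ (q / (1 - q)) = ((1:ℝ) / q) ^ (q / (q - 1)) := by
      rw [einv]; congr 1
      rw [show (1 - q : ℝ) = -(q - 1) by ring, div_neg]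
    have eexp2 : q ^ (1 / (1 - q)) = ((1:ℝ) / q) ^ (1 / (q - 1)) := by
      rw [einv]; congr 1
      rw [show (1 - q : ℝ) = -(q - 1) by ring, div_neg]
    have hset : {v : ℝ | ∃ x : ℝ, 0 ≤ x ∧
        x ^ (1:ℝ) + (((1:ℝ) / q) * x ^ ((1:ℝ) - 1)) ^ (q / (q - 1)) = 1 ∧
        v = x + (((1:ℝ) / q) * x ^ ((1:ℝ) - 1)) ^ (1 / (q - 1))}
        = {1 + q ^ (1 / (1 - q)) - q ^ (q / (1 - q))} := by
      ext v
      simp only [Set.mem_setOf_eq, Set.mem_singleton_iff, show ((1:ℝ) - 1) = 0 by norm_num,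
        Real.rpow_zero, mul_one, Real.rpow_one]
      constructor
      · rintro ⟨x, hx0, hcon, rfl⟩
        rw [eexp1, eexp2]; linarith
      · rintro rfl
        refine ⟨1 - ((1:ℝ) / q) ^ (q / (q - 1)), ?_, by ring, by rw [eexp1, eexp2]; ring⟩
        have : ((1:ℝ) / q) ^ (q / (q - 1)) ≤ 1 := by
          apply Real.rpow_le_one (by positivity) _ (by positivity)
          rw [div_le_one hq0]; linarith
        linarith
    rw [hset, csInf_singleton]
end

section
/- If 1≤p≤q<∞, then the Sparr constant satisfies 2^{1-1/p} ≤ γ_{p,q} ≤ 2^{1-1/q}. -/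
open Real Set Filter

namespace SparrAux

variable (p q : ℝ)

def V (γ : ℝ) : Set ℝ :=
  {v : ℝ | ∃ x y : ℝ, 0 ≤ x ∧ 0 ≤ y ∧ x + y = γ ∧ v = x ^ p + y ^ q}

noncomputable def m (γ : ℝ) : ℝ := sInf (V p q γ)

lemma sparr_eq : sparr p q = sInf {γ : ℝ | 0 < γ ∧ m p q γ = 1} := rfl

lemma bddV (γ : ℝ) : BddBelow (V p q γ) := by
  refine ⟨0, ?_⟩
  rintro v ⟨x, y, hx, hy, -, rfl⟩
  exact add_nonneg (Real.rpow_nonneg hx p) (Real.rpow_nonneg hy q)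

lemma neV {γ : ℝ} (hγ : 0 ≤ γ) : (V p q γ).Nonempty :=
  ⟨γ ^ p + (0 : ℝ) ^ q, γ, 0, hγ, le_refl 0, add_zero γ, rfl⟩

lemma m_le {γ x y : ℝ} (hx : 0 ≤ x) (hy : 0 ≤ y) (hxy : x + y = γ) :
    m p q γ ≤ x ^ p + y ^ q :=
  csInf_le (bddV p q γ) ⟨x, y, hx, hy, hxy, rfl⟩

lemma le_m {γ c : ℝ} (hγ : 0 ≤ γ)
    (h : ∀ x y : ℝ, 0 ≤ x → 0 ≤ y → x + y = γ → c ≤ x ^ p + y ^ q) :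
    c ≤ m p q γ := by
  refine le_csInf (neV p q hγ) ?_
  rintro v ⟨x, y, hx, hy, hxy, rfl⟩
  exact h x y hx hy hxy

/-- Convexity estimate: for `1 ≤ p`, `0 ≤ a ≤ b`, `0 ≤ δ`,
`(a+δ)^p + b^p ≤ a^p + (b+δ)^p`. -/
lemma key {p : ℝ} (hp : 1 ≤ p) {a b δ : ℝ} (ha : 0 ≤ a) (hab : a ≤ b) (hδ : 0 ≤ δ) :
    (a + δ) ^ p + b ^ p ≤ a ^ p + (b + δ) ^ p := by
  rcases eq_or_lt_of_le (show a ≤ b + δ by linarith) with h | h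
  · have hδ0 : δ = 0 := by linarith
    have hab' : a = b := by linarith
    subst hδ0; subst hab'; simp
  · set t : ℝ := b + δ - a with ht_def
    have ht : 0 < t := by simp only [ht_def]; linarith
    set lam : ℝ := (b - a) / t with hlam_def
    set mu : ℝ := δ / t with hmu_def
    have hlam : 0 ≤ lam := div_nonneg (by linarith) ht.le
    have hmu : 0 ≤ mu := div_nonneg hδ ht.le
    have hsum : lam + mu = 1 := by
      rw [hlam_def, hmu_def, ← add_div, div_eq_one_iff_eq ht.ne', ht_def]
      ring
    have cv := convexOn_rpow hp
    have hbδ : b + δ ∈ Ici (0 : ℝ) := by simp; linarith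
    have haI : a ∈ Ici (0 : ℝ) := ha
    have h1 := cv.2 haI hbδ hlam hmu hsum
    have h2 := cv.2 hbδ haI hlam hmu (by linarith)
    simp only [smul_eq_mul] at h1 h2
    have e1 : lam * a + mu * (b + δ) = a + δ := by
      rw [hlam_def, hmu_def, div_mul_eq_mul_div, div_mul_eq_mul_div, ← add_div,
        div_eq_iff ht.ne', ht_def]
      ring
    have e2 : lam * (b + δ) + mu * a = b := by
      rw [hlam_def, hmu_def, div_mul_eq_mul_div, div_mul_eq_mul_div, ← add_div,
        div_eq_iff ht.ne', ht_def]
      ring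
    rw [e1] at h1
    rw [e2] at h2
    have f1 : lam * (a ^ p) + mu * (a ^ p) = a ^ p := by
      rw [← add_mul, hsum, one_mul]
    have f2 : lam * ((b + δ) ^ p) + mu * ((b + δ) ^ p) = (b + δ) ^ p := by
      rw [← add_mul, hsum, one_mul]
    linarith

lemma m_mono (hp : 1 ≤ p) (hq : 1 ≤ q) {γ' γ : ℝ} (h0 : 0 ≤ γ') (h : γ' ≤ γ) :
    m p q γ' ≤ m p q γ := by
  have hp0 : (0 : ℝ) < p := lt_of_lt_of_le one_pos hp
  have hq0 : (0 : ℝ) < q := lt_of_lt_of_le one_pos hq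
  refine le_csInf (neV p q (h0.trans h)) ?_
  rintro v ⟨x, y, hx, hy, hxy, rfl⟩
  rcases le_total y γ' with hc | hc
  · have hle := m_le p q (x := γ' - y) (y := y) (by linarith) hy (by ring)
    have hxx : (γ' - y) ^ p ≤ x ^ p :=
      Real.rpow_le_rpow (by linarith) (by linarith) hp0.le
    linarith
  · have hle := m_le p q (x := 0) (y := γ') (le_refl 0) h0 (zero_add γ')
    rw [Real.zero_rpow hp0.ne'] at hle
    have hyy : γ' ^ q ≤ y ^ q := Real.rpow_le_rpow h0 hc hq0.le
    have hxp : 0 ≤ x ^ p := Real.rpow_nonneg hx p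
    linarith

lemma m_cont_ub (hp : 1 ≤ p) {γ' γ : ℝ} (h0 : 0 ≤ γ') (h : γ' ≤ γ) :
    m p q γ ≤ m p q γ' + (γ ^ p - γ' ^ p) := by
  have hb : m p q γ - (γ ^ p - γ' ^ p) ≤ m p q γ' := by
    refine le_csInf (neV p q h0) ?_
    rintro v ⟨x, y, hx, hy, hxy, rfl⟩
    have hk := key hp hx (show x ≤ γ' by linarith [Real.rpow_nonneg hy q, hy])
      (show (0 : ℝ) ≤ γ - γ' by linarith)
    have hγγ : γ' + (γ - γ') = γ := by ring
    rw [hγγ] at hk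
    have hm := m_le p q (γ := γ) (x := x + (γ - γ')) (y := y) (by linarith) hy (by linarith)
    linarith
  linarith

lemma m_close (hp : 1 ≤ p) (hq : 1 ≤ q) {a b : ℝ} (ha : 0 ≤ a) (hb : 0 ≤ b) :
    m p q a ≤ m p q b + |a ^ p - b ^ p| := by
  have habs : (0 : ℝ) ≤ |a ^ p - b ^ p| := abs_nonneg _
  rcases le_total a b with h | h
  · have := m_mono p q hp hq ha h
    linarith
  · have h1 := m_cont_ub p q hp hb h
    have h2 : a ^ p - b ^ p ≤ |a ^ p - b ^ p| := le_abs_self _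
    linarith

lemma m_contOn (hp : 1 ≤ p) (hq : 1 ≤ q) : ContinuousOn (m p q) (Ici 0) := by
  intro γ₀ hγ₀
  have hp0 : (0 : ℝ) ≤ p := le_trans zero_le_one hp
  have hcont : ContinuousAt (fun γ : ℝ => |γ ^ p - γ₀ ^ p|) γ₀ :=
    ((Real.continuousAt_rpow_const γ₀ p (Or.inr hp0)).sub continuousAt_const).abs
  have hlim : Tendsto (fun γ : ℝ => |γ ^ p - γ₀ ^ p|) (nhdsWithin γ₀ (Ici 0)) (nhds 0) := by
    have := hcont.continuousWithinAt (s := Ici (0 : ℝ))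
    simpa [ContinuousWithinAt] using this
  have hlow : Tendsto (fun γ : ℝ => m p q γ₀ - |γ ^ p - γ₀ ^ p|)
      (nhdsWithin γ₀ (Ici 0)) (nhds (m p q γ₀)) := by
    have := (tendsto_const_nhds (x := m p q γ₀)
      (f := nhdsWithin γ₀ (Ici (0:ℝ)))).sub hlim
    simpa using this
  have hhigh : Tendsto (fun γ : ℝ => m p q γ₀ + |γ ^ p - γ₀ ^ p|)
      (nhdsWithin γ₀ (Ici 0)) (nhds (m p q γ₀)) := by
    have := (tendsto_const_nhds (x := m p q γ₀)
      (f := nhdsWithin γ₀ (Ici (0:ℝ)))).add hlim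
    simpa using this
  refine tendsto_of_tendsto_of_tendsto_of_le_of_le' hlow hhigh ?_ ?_
  · filter_upwards [self_mem_nhdsWithin] with γ hγ
    have := m_close p q hp hq (mem_Ici.1 hγ₀) (mem_Ici.1 hγ)
    have habs : |γ₀ ^ p - γ ^ p| = |γ ^ p - γ₀ ^ p| := abs_sub_comm _ _
    rw [habs] at this
    linarith
  · filter_upwards [self_mem_nhdsWithin] with γ hγ
    exact m_close p q hp hq (mem_Ici.1 hγ) (mem_Ici.1 hγ₀)

end SparrAux

theorem stmt11 (p q : ℝ) (hp : 1 ≤ p) (hpq : p ≤ q) :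
    (2:ℝ) ^ (1 - 1/p) ≤ sparr p q ∧ sparr p q ≤ (2:ℝ) ^ (1 - 1/q) := by
  open SparrAux in
  have hq : 1 ≤ q := hp.trans hpq
  have hp0 : (0 : ℝ) < p := lt_of_lt_of_le one_pos hp
  have hq0 : (0 : ℝ) < q := lt_of_lt_of_le one_pos hq
  set A : ℝ := (2 : ℝ) ^ (-(1/p)) with hA_def
  set B : ℝ := (2 : ℝ) ^ (-(1/q)) with hB_def
  have hApos : 0 < A := Real.rpow_pos_of_pos two_pos _
  have hBpos : 0 < B := Real.rpow_pos_of_pos two_pos _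
  have hA1 : A ≤ 1 := Real.rpow_le_one_of_one_le_of_nonpos one_le_two
    (by rw [neg_nonpos]; positivity)
  have hAp : A ^ p = 1/2 := by
    rw [hA_def, ← Real.rpow_mul (by norm_num : (0:ℝ) ≤ 2)]
    rw [show -(1/p) * p = -1 by field_simp]
    rw [Real.rpow_neg_one]; norm_num
  have hBq : B ^ q = 1/2 := by
    rw [hB_def, ← Real.rpow_mul (by norm_num : (0:ℝ) ≤ 2)]
    rw [show -(1/q) * q = -1 by field_simp]
    rw [Real.rpow_neg_one]; norm_num
  have hAq : A ^ q ≤ 1/2 := by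
    rw [hA_def, ← Real.rpow_mul (by norm_num : (0:ℝ) ≤ 2)]
    have hqp : (1 : ℝ) ≤ q / p := (one_le_div hp0).2 hpq
    have he : -(1/p) * q ≤ -1 := by
      have : -(1/p) * q = -(q/p) := by ring
      rw [this]; linarith
    calc (2:ℝ) ^ (-(1/p) * q) ≤ (2:ℝ) ^ (-1 : ℝ) :=
          Real.rpow_le_rpow_of_exponent_le one_le_two he
      _ = 1/2 := by rw [Real.rpow_neg_one]; norm_num
  have hγlow : (2:ℝ) ^ (1 - 1/p) = A + A := by
    rw [show (1:ℝ) - 1/p = 1 + (-(1/p)) by ring, Real.rpow_add two_pos, Real.rpow_one,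
      ← hA_def]
    ring
  have hγhigh : (2:ℝ) ^ (1 - 1/q) = B + B := by
    rw [show (1:ℝ) - 1/q = 1 + (-(1/q)) by ring, Real.rpow_add two_pos, Real.rpow_one,
      ← hB_def]
    ring
  -- m at the lower endpoint is ≤ 1
  have hmlow : m p q ((2:ℝ) ^ (1 - 1/p)) ≤ 1 := by
    have := m_le p q (x := A) (y := A) hApos.le hApos.le hγlow.symm
    rw [hAp] at this
    linarith
  -- m at the upper endpoint is ≥ 1
  have hmhigh : 1 ≤ m p q ((2:ℝ) ^ (1 - 1/q)) := by
    refine le_m p q (Real.rpow_nonneg (by norm_num) _) ?_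
    intro x y hx hy hxy
    rcases le_or_gt 1 x with h1 | h1
    · have hx1 : (1:ℝ) ≤ x ^ p := by
        calc (1:ℝ) = 1 ^ p := (Real.one_rpow p).symm
          _ ≤ x ^ p := Real.rpow_le_rpow zero_le_one h1 hp0.le
      have := Real.rpow_nonneg hy q
      linarith
    · have hxq : x ^ q ≤ x ^ p := by
        rcases eq_or_lt_of_le hx with h0 | h0
        · rw [← h0, Real.zero_rpow hp0.ne', Real.zero_rpow hq0.ne']
        · exact Real.rpow_le_rpow_of_exponent_ge h0 h1.le hpq
      have hmean : 1 ≤ x ^ q + y ^ q := by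
        have cv := convexOn_rpow hq
        have h2 := cv.2 (mem_Ici.2 hx) (mem_Ici.2 hy)
          (by norm_num : (0:ℝ) ≤ 1/2) (by norm_num : (0:ℝ) ≤ 1/2) (by norm_num)
        simp only [smul_eq_mul] at h2
        have hmid : (1/2 : ℝ) * x + (1/2 : ℝ) * y = B := by
          rw [hγhigh] at hxy; linarith
        rw [hmid, hBq] at h2
        linarith
      linarith
  -- every element of the defining set is ≥ 2^(1-1/p)
  have hbound : ∀ γ : ℝ, γ ∈ {γ : ℝ | 0 < γ ∧ m p q γ = 1} → (2:ℝ) ^ (1 - 1/p) ≤ γ := by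
    rintro γ ⟨hγpos, hγm⟩
    by_contra hlt
    push_neg at hlt
    rw [hγlow] at hlt
    have h2 : γ / 2 < A := by linarith
    have hh := m_le p q (x := γ/2) (y := γ/2) (by linarith) (by linarith) (by ring)
    have e1 : (γ/2) ^ p < 1/2 := by
      rw [← hAp]
      exact Real.rpow_lt_rpow (by linarith) h2 hp0
    have e2 : (γ/2) ^ q ≤ (γ/2) ^ p :=
      Real.rpow_le_rpow_of_exponent_ge (by linarith) (by linarith) hpq
    rw [hγm] at hh
    linarith
  -- intermediate value theorem: some γ* in [2^(1-1/p), 2^(1-1/q)] with m γ* = 1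
  have hle : (2:ℝ) ^ (1 - 1/p) ≤ (2:ℝ) ^ (1 - 1/q) := by
    apply Real.rpow_le_rpow_of_exponent_le one_le_two
    have : 1/q ≤ 1/p := one_div_le_one_div_of_le hp0 hpq
    linarith
  have hlowpos : (0:ℝ) < (2:ℝ) ^ (1 - 1/p) := Real.rpow_pos_of_pos two_pos _
  have hsubset : Icc ((2:ℝ) ^ (1 - 1/p)) ((2:ℝ) ^ (1 - 1/q)) ⊆ Ici (0:ℝ) :=
    fun z hz => le_trans hlowpos.le hz.1
  have hcont : ContinuousOn (m p q) (Icc ((2:ℝ) ^ (1 - 1/p)) ((2:ℝ) ^ (1 - 1/q))) :=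
    (m_contOn p q hp hq).mono hsubset
  obtain ⟨γs, hγsmem, hγs⟩ := intermediate_value_Icc hle hcont ⟨hmlow, hmhigh⟩
  have hγspos : 0 < γs := lt_of_lt_of_le hlowpos hγsmem.1
  have hmemS : γs ∈ {γ : ℝ | 0 < γ ∧ m p q γ = 1} := ⟨hγspos, hγs⟩
  have hbdd : BddBelow {γ : ℝ | 0 < γ ∧ m p q γ = 1} := ⟨(2:ℝ) ^ (1 - 1/p), hbound⟩
  constructor
  · rw [sparr_eq]
    exact le_csInf ⟨γs, hmemS⟩ hbound
  · rw [sparr_eq]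
    exact (csInf_le hbdd hmemS).trans hγsmem.2
end

section
/- Define h:[0,∞)→[0,∞) by h(0)=0 and h(t) = t·ln(1 + 1/t) for t>0. Then h is strictly increasing and concave on (0,∞) (indeed h'(t) = ln(1+1/t) − 1/(1+t) > 0 and h''(t) = −1/(t(1+t)²) < 0 for t>0), and for all p,q with 1≤p<q<∞ the function φ(u) = u^q h(u^{p-q}) = u^p ln(1 + u^{q-p}) is convex on [0,∞). -/
open Set

private lemma hasDerivAt_h_aux {h : ℝ → ℝ}
    (hht : ∀ t : ℝ, 0 < t → h t = t * Real.log (1 + 1/t)) {t : ℝ} (ht : 0 < t) :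
    HasDerivAt h (Real.log (1 + 1/t) - 1/(1+t)) t := by
  have ht' : t ≠ 0 := ht.ne'
  have h1 : (0:ℝ) < 1 + 1/t := by positivity
  have hinner : HasDerivAt (fun x : ℝ => 1 + 1/x) (-(t^2)⁻¹) t := by
    simpa [one_div] using (hasDerivAt_inv ht').const_add 1
  have hlog : HasDerivAt (fun x : ℝ => Real.log (1 + 1/x)) (-(t^2)⁻¹ / (1 + 1/t)) t :=
    hinner.log h1.ne'
  have hg : HasDerivAt (fun x : ℝ => x * Real.log (1 + 1/x))
      (1 * Real.log (1 + 1/t) + t * (-(t^2)⁻¹ / (1 + 1/t))) t :=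
    (hasDerivAt_id t).mul hlog
  have heq : h =ᶠ[nhds t] (fun x : ℝ => x * Real.log (1 + 1/x)) := by
    filter_upwards [isOpen_Ioi.mem_nhds (show t ∈ Ioi 0 from ht)] with x hx
    exact hht x hx
  have := hg.congr_of_eventuallyEq heq
  refine this.congr_deriv ?_
  have h1t : (1:ℝ) + t ≠ 0 := by positivity
  field_simp
  ring

private lemma h_deriv_pos {t : ℝ} (ht : 0 < t) :
    0 < Real.log (1 + 1/t) - 1/(1+t) := by
  have h1t : (0:ℝ) < 1 + t := by linarith
  have hx : (0:ℝ) < (1 + 1/t)⁻¹ := by positivity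
  have hx1 : ((1:ℝ) + 1/t)⁻¹ ≠ 1 := by
    have : (1:ℝ) < 1 + 1/t := by
      have : (0:ℝ) < 1/t := by positivity
      linarith
    intro hcon
    have := inv_eq_one.mp hcon
    linarith
  have hlt := Real.log_lt_sub_one_of_pos hx hx1
  rw [Real.log_inv] at hlt
  have he : ((1:ℝ) + 1/t)⁻¹ = t/(1+t) := by
    rw [inv_eq_one_div]
    rw [div_eq_div_iff (by positivity) (by positivity)]
    field_simp
    ring
  rw [he] at hlt
  have h2 : t/(1+t) - 1 = -(1/(1+t)) := by
    rw [sub_eq_iff_eq_add, div_eq_iff (by positivity : (0:ℝ) < 1+t).ne']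
    field_simp
    ring
  rw [h2] at hlt
  linarith

private lemma hasDerivAt_h'_aux {t : ℝ} (ht : 0 < t) :
    HasDerivAt (fun x : ℝ => Real.log (1 + 1/x) - 1/(1+x))
      (-(1/(t * (1+t)^2))) t := by
  have ht' : t ≠ 0 := ht.ne'
  have h1 : (0:ℝ) < 1 + 1/t := by positivity
  have h1t : (0:ℝ) < 1 + t := by linarith
  have hinner : HasDerivAt (fun x : ℝ => 1 + 1/x) (-(t^2)⁻¹) t := by
    simpa [one_div] using (hasDerivAt_inv ht').const_add 1
  have hlog : HasDerivAt (fun x : ℝ => Real.log (1 + 1/x)) (-(t^2)⁻¹ / (1 + 1/t)) t :=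
    hinner.log h1.ne'
  have hinv : HasDerivAt (fun x : ℝ => 1/(1+x)) (-(1/(1+t)^2)) t := by
    have hi : HasDerivAt (fun x : ℝ => 1 + x) 1 t := (hasDerivAt_id t).const_add 1
    have h2 := hi.inv h1t.ne'
    simp only [one_div]
    refine h2.congr_deriv ?_
    ring
  have := hlog.sub hinv
  refine this.congr_deriv ?_
  field_simp
  ring

theorem stmt16 (h : ℝ → ℝ) (hh0 : h 0 = 0)
    (hht : ∀ t : ℝ, 0 < t → h t = t * Real.log (1 + 1/t)) :
    -- `h` is strictly increasing and concave on `(0,∞)`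
    StrictMonoOn h (Set.Ioi 0) ∧ ConcaveOn ℝ (Set.Ioi 0) h ∧
    -- indeed `h'(t) = ln(1+1/t) - 1/(1+t) > 0` and `h''(t) = -1/(t(1+t)²) < 0`
    (∀ t : ℝ, 0 < t → deriv h t = Real.log (1 + 1/t) - 1/(1+t)) ∧
    (∀ t : ℝ, 0 < t → 0 < Real.log (1 + 1/t) - 1/(1+t)) ∧
    (∀ t : ℝ, 0 < t → deriv (deriv h) t = -(1/(t * (1+t)^2))) ∧
    (∀ t : ℝ, 0 < t → -(1/(t * (1+t)^2)) < 0) ∧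
    -- for all `1 ≤ p < q < ∞`, the function `φ(u) = u^q h(u^{p-q}) = u^p ln(1+u^{q-p})`
    -- is convex on `[0,∞)`
    (∀ p q : ℝ, 1 ≤ p → p < q →
      (∀ u : ℝ, 0 < u →
        u ^ q * h (u ^ (p - q)) = u ^ p * Real.log (1 + u ^ (q - p))) ∧
      ConvexOn ℝ (Set.Ici 0) (fun u : ℝ => u ^ p * Real.log (1 + u ^ (q - p)))) := by
  have hcont : ContinuousOn h (Ioi 0) := fun t ht =>
    ((hasDerivAt_h_aux hht ht).continuousAt).continuousWithinAt
  have hderiv : ∀ t : ℝ, 0 < t → deriv h t = Real.log (1 + 1/t) - 1/(1+t) :=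
    fun t ht => (hasDerivAt_h_aux hht ht).deriv
  have hderiv2 : ∀ t : ℝ, 0 < t → deriv (deriv h) t = -(1/(t * (1+t)^2)) := by
    intro t ht
    have heq : deriv h =ᶠ[nhds t] (fun x : ℝ => Real.log (1 + 1/x) - 1/(1+x)) := by
      filter_upwards [isOpen_Ioi.mem_nhds (show t ∈ Ioi 0 from ht)] with x hx
      exact hderiv x hx
    exact ((hasDerivAt_h'_aux ht).congr_of_eventuallyEq heq).deriv
  refine ⟨?_, ?_, hderiv, fun t ht => h_deriv_pos ht, hderiv2, ?_, ?_⟩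
  · -- strict mono
    apply strictMonoOn_of_deriv_pos (convex_Ioi 0) hcont
    intro x hx
    rw [interior_Ioi] at hx
    rw [hderiv x hx]
    exact h_deriv_pos hx
  · -- concave
    apply concaveOn_of_hasDerivWithinAt2_nonpos (convex_Ioi 0)
      (f' := fun x => Real.log (1 + 1/x) - 1/(1+x))
      (f'' := fun x => -(1/(x * (1+x)^2))) hcont
    · intro x hx
      rw [interior_Ioi] at hx
      exact (hasDerivAt_h_aux hht hx).hasDerivWithinAt
    · intro x hx
      rw [interior_Ioi] at hx
      exact (hasDerivAt_h'_aux hx).hasDerivWithinAt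
    · intro x hx
      rw [interior_Ioi] at hx
      have hx' : (0:ℝ) < x := hx
      have : (0:ℝ) < 1/(x * (1+x)^2) := by positivity
      linarith
  · intro t ht
    have : (0:ℝ) < 1/(t * (1+t)^2) := by positivity
    linarith
  · intro p q hp hpq
    have hp0 : (0:ℝ) < p := lt_of_lt_of_le one_pos hp
    have ha : (0:ℝ) < q - p := by linarith
    constructor
    · intro u hu
      have h1 : (0:ℝ) < u ^ (p - q) := Real.rpow_pos_of_pos hu _
      rw [hht _ h1]
      have e1 : (1:ℝ) / u^(p-q) = u^(q-p) := by
        rw [one_div, ← Real.rpow_neg hu.le, neg_sub]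
      have e2 : u^q * u^(p-q) = u^p := by
        rw [← Real.rpow_add hu]; congr 1; ring
      rw [e1, ← mul_assoc, e2]
    · have key : ∀ u : ℝ, 0 < u →
          HasDerivAt (fun x : ℝ => x ^ p * Real.log (1 + x ^ (q - p)))
            (p * u^(p-1) * Real.log (1 + u^(q-p)) + (q-p) * u^(q-1) / (1 + u^(q-p))) u := by
        intro u hu
        have hv : (0:ℝ) < 1 + u^(q-p) := by
          have := Real.rpow_pos_of_pos hu (q-p); linarith
        have hA : HasDerivAt (fun x : ℝ => x ^ p) (p * u^(p-1)) u :=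
          Real.hasDerivAt_rpow_const (Or.inl hu.ne')
        have hB : HasDerivAt (fun x : ℝ => 1 + x ^ (q-p)) ((q-p) * u^(q-p-1)) u :=
          (Real.hasDerivAt_rpow_const (Or.inl hu.ne')).const_add 1
        have hL : HasDerivAt (fun x : ℝ => Real.log (1 + x ^ (q-p)))
            ((q-p) * u^(q-p-1) / (1 + u^(q-p))) u := hB.log hv.ne'
        have := hA.mul hL
        refine this.congr_deriv ?_
        have k3 : u^p * u^(q-p-1) = u^(q-1) := by
          rw [← Real.rpow_add hu]; congr 1; ring
        rw [← k3]; ring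
      have key2 : ∀ u : ℝ, 0 < u →
          HasDerivAt (fun x : ℝ => p * x^(p-1) * Real.log (1 + x^(q-p)) + (q-p) * x^(q-1) / (1 + x^(q-p)))
            (p * (p-1) * u^(p-2) * Real.log (1 + u^(q-p))
              + (q-p) * u^(q-2) * ((p+q-1) + (2*p-1) * u^(q-p)) / (1 + u^(q-p))^2) u := by
        intro u hu
        have hv : (0:ℝ) < 1 + u^(q-p) := by
          have := Real.rpow_pos_of_pos hu (q-p); linarith
        have hA1 : HasDerivAt (fun x : ℝ => x ^ (p-1)) ((p-1) * u^(p-1-1)) u :=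
          Real.hasDerivAt_rpow_const (Or.inl hu.ne')
        have hB : HasDerivAt (fun x : ℝ => 1 + x ^ (q-p)) ((q-p) * u^(q-p-1)) u :=
          (Real.hasDerivAt_rpow_const (Or.inl hu.ne')).const_add 1
        have hL : HasDerivAt (fun x : ℝ => Real.log (1 + x ^ (q-p)))
            ((q-p) * u^(q-p-1) / (1 + u^(q-p))) u := hB.log hv.ne'
        have hC : HasDerivAt (fun x : ℝ => x ^ (q-1)) ((q-1) * u^(q-1-1)) u :=
          Real.hasDerivAt_rpow_const (Or.inl hu.ne')
        have t1 := ((hA1.const_mul p).mul hL)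
        have t2 := (hC.const_mul (q-p)).div hB hv.ne'
        have := t1.add t2
        refine this.congr_deriv ?_
        have k1 : u^(p-1-1) = u^(p-2) := by congr 1; ring
        have k2 : u^(q-1-1) = u^(q-2) := by congr 1; ring
        have k3 : u^(p-1) * u^(q-p-1) = u^(q-2) := by
          rw [← Real.rpow_add hu]; congr 1; ring
        have k4 : u^(q-1) * u^(q-p-1) = u^(q-2) * u^(q-p) := by
          rw [← Real.rpow_add hu, ← Real.rpow_add hu]; congr 1; ring
        rw [k1, k2]
        field_simp
        linear_combination (p*(q-p)*(1+u^(q-p))) * k3 + (-(q-p)^2) * k4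
      apply convexOn_of_hasDerivWithinAt2_nonneg (convex_Ici 0)
        (f' := fun u => p * u^(p-1) * Real.log (1 + u^(q-p)) + (q-p) * u^(q-1) / (1 + u^(q-p)))
        (f'' := fun u => p * (p-1) * u^(p-2) * Real.log (1 + u^(q-p))
              + (q-p) * u^(q-2) * ((p+q-1) + (2*p-1) * u^(q-p)) / (1 + u^(q-p))^2)
      · intro u hu
        have h1 : ContinuousAt (fun x : ℝ => x ^ p) u :=
          Real.continuousAt_rpow_const u p (Or.inr hp0.le)
        have h2 : ContinuousAt (fun x : ℝ => 1 + x ^ (q-p)) u :=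
          (Real.continuousAt_rpow_const u (q-p) (Or.inr ha.le)).const_add 1
        have hne : (1:ℝ) + u ^ (q-p) ≠ 0 := by
          have : (0:ℝ) ≤ u ^ (q-p) := Real.rpow_nonneg hu _
          linarith
        exact ((h1.mul (h2.log hne))).continuousWithinAt
      · intro u hu
        rw [interior_Ici] at hu
        exact (key u hu).hasDerivWithinAt
      · intro u hu
        rw [interior_Ici] at hu
        exact (key2 u hu).hasDerivWithinAt
      · intro u hu
        rw [interior_Ici] at hu
        have hv : (0:ℝ) < u^(q-p) := Real.rpow_pos_of_pos hu _
        have hL : (0:ℝ) ≤ Real.log (1 + u^(q-p)) := Real.log_nonneg (by linarith)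
        have hterm1 : (0:ℝ) ≤ p * (p-1) * u^(p-2) * Real.log (1 + u^(q-p)) := by
          have : (0:ℝ) ≤ u^(p-2) := (Real.rpow_pos_of_pos hu _).le
          have hp1 : (0:ℝ) ≤ p - 1 := by linarith
          positivity
        have hterm2 : (0:ℝ) ≤ (q-p) * u^(q-2) * ((p+q-1) + (2*p-1) * u^(q-p)) / (1 + u^(q-p))^2 := by
          apply div_nonneg _ (by positivity)
          have h1 : (0:ℝ) ≤ u^(q-2) := (Real.rpow_pos_of_pos hu _).le
          have h2 : (0:ℝ) ≤ (p+q-1) + (2*p-1) * u^(q-p) := by nlinarith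
          have := ha.le
          positivity
        linarith
end
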